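/- arXiv:2111.14008 — 9 statements merged into one kernel-verified Lean document; each statement's English description precedes it below -/
import Mathlib

section
/- Let γ > 0, B ≥ 0, ε ≥ 0 be real numbers and let β ≥ 3/(2γ). Define step sizes η₀ = β and η_t = β/t for every integer t ≥ 1. Suppose (Δ_t)_{t≥0} is a sequence of nonnegative reals satisfying Δ_{t+1} ≤ (1 − η_t γ)Δ_t + η_t² B + 2 η_t ε for every integer t ≥ 0. Then for every integer t ≥ 1, Δ_t ≤ 2β²B/t + 2βε. -/
set_option maxHeartbeats 800000 in
theorem stmt_0 (γ B ε β : ℝ) (hγ : 0 < γ) (hB : 0 ≤ B) (hε : 0 ≤ ε)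
    (hβ : 3 / (2 * γ) ≤ β)
    (η : ℕ → ℝ) (hη0 : η 0 = β) (hη : ∀ t : ℕ, 1 ≤ t → η t = β / t)
    (Δ : ℕ → ℝ) (hΔ : ∀ t, 0 ≤ Δ t)
    (hrec : ∀ t : ℕ, Δ (t + 1) ≤ (1 - η t * γ) * Δ t + (η t) ^ 2 * B + 2 * η t * ε) :
    ∀ t : ℕ, 1 ≤ t → Δ t ≤ 2 * β ^ 2 * B / t + 2 * β * ε := by
  have hβpos : 0 < β := lt_of_lt_of_le (by positivity) hβ
  have hβγ : 3 / 2 ≤ β * γ := by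
    rw [div_le_iff₀ (by positivity)] at hβ
    nlinarith
  intro t ht
  induction t, ht using Nat.le_induction with
  | base =>
    have h := hrec 0
    rw [hη0] at h
    have h0 : (1 - β * γ) * Δ 0 ≤ 0 :=
      mul_nonpos_of_nonpos_of_nonneg (by linarith) (hΔ 0)
    have hb2 : 0 ≤ β ^ 2 * B := by positivity
    push_cast
    rw [div_one]
    nlinarith
  | succ t ht IH =>
    have hs : (1 : ℝ) ≤ (t : ℝ) := by exact_mod_cast ht
    have hspos : (0 : ℝ) < (t : ℝ) := by linarith
    have h := hrec t
    rw [hη t ht] at h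
    have hcast : ((t + 1 : ℕ) : ℝ) = (t : ℝ) + 1 := by push_cast; ring
    rw [hcast]
    set s := (t : ℝ)
    have key : (β / s) ^ 2 * B = β ^ 2 * B / s ^ 2 := by ring
    rcases le_or_gt (1 - β / s * γ) 0 with hA | hA
    · have h1 : (1 - β / s * γ) * Δ t ≤ 0 :=
        mul_nonpos_of_nonpos_of_nonneg hA (hΔ t)
      have h2 : β ^ 2 * B / s ^ 2 ≤ 2 * β ^ 2 * B / (s + 1) := by
        rw [div_le_div_iff₀ (by positivity) (by positivity)]
        nlinarith [mul_nonneg (mul_nonneg (sq_nonneg β) hB) (by nlinarith : (0:ℝ) ≤ 2 * s ^ 2 - s - 1)]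
      have h3 : 2 * (β / s) * ε ≤ 2 * β * ε := by
        have hd : β / s ≤ β := div_le_self hβpos.le hs
        nlinarith
      calc Δ (t + 1) ≤ (1 - β / s * γ) * Δ t + (β / s) ^ 2 * B + 2 * (β / s) * ε := h
        _ ≤ β ^ 2 * B / s ^ 2 + 2 * (β / s) * ε := by rw [key]; linarith
        _ ≤ 2 * β ^ 2 * B / (s + 1) + 2 * β * ε := by linarith
    · have hAle : 1 - β / s * γ ≤ 1 - 3 / (2 * s) := by
        have : 3 / (2 * s) ≤ β / s * γ := by
          rw [div_mul_eq_mul_div, div_le_div_iff₀ (by positivity) hspos]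
          nlinarith
        linarith
      have h1 : (1 - β / s * γ) * Δ t ≤ (1 - β / s * γ) * (2 * β ^ 2 * B / s + 2 * β * ε) :=
        mul_le_mul_of_nonneg_left IH (le_of_lt hA)
      have hmain : (1 - β / s * γ) * (2 * β ^ 2 * B / s + 2 * β * ε) + β ^ 2 * B / s ^ 2
          + 2 * (β / s) * ε ≤ 2 * β ^ 2 * B / (s + 1) + 2 * β * ε := by
        have hbg1 : 1 ≤ β * γ := by linarith
        have e1 : (1 - β / s * γ) * (2 * β ^ 2 * B / s) ≤ (1 - 3 / (2 * s)) * (2 * β ^ 2 * B / s) := by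
          apply mul_le_mul_of_nonneg_right hAle (by positivity)
        have e2 : (1 - β / s * γ) * (2 * β * ε) + 2 * (β / s) * ε ≤ 2 * β * ε := by
          have hd : 0 ≤ β / s * ε * (β * γ - 1) :=
            mul_nonneg (mul_nonneg (div_nonneg hβpos.le hspos.le) hε) (by linarith)
          have hexp : (1 - β / s * γ) * (2 * β * ε) + 2 * (β / s) * ε
              = 2 * β * ε - 2 * (β / s * ε * (β * γ - 1)) := by ring
          linarith
        have e3 : (1 - 3 / (2 * s)) * (2 * β ^ 2 * B / s) + β ^ 2 * B / s ^ 2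
            ≤ 2 * β ^ 2 * B / (s + 1) := by
          have lhs_eq : (1 - 3 / (2 * s)) * (2 * β ^ 2 * B / s) + β ^ 2 * B / s ^ 2
              = 2 * β ^ 2 * B * (s - 1) / s ^ 2 := by
            field_simp
            ring
          rw [lhs_eq, div_le_div_iff₀ (by positivity) (by positivity)]
          have hb : 0 ≤ β ^ 2 * B := mul_nonneg (sq_nonneg β) hB
          have hr : 2 * β ^ 2 * B * (s - 1) * (s + 1) = 2 * β ^ 2 * B * s ^ 2 - 2 * (β ^ 2 * B) := by
            ring
          linarith
        linarith
      calc Δ (t + 1) ≤ (1 - β / s * γ) * Δ t + (β / s) ^ 2 * B + 2 * (β / s) * ε := h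
        _ ≤ (1 - β / s * γ) * (2 * β ^ 2 * B / s + 2 * β * ε) + β ^ 2 * B / s ^ 2 + 2 * (β / s) * ε := by
            rw [key]; linarith
        _ ≤ 2 * β ^ 2 * B / (s + 1) + 2 * β * ε := hmain
end

section
/- Let H be a real inner product space and let k range over a nonempty finite index set. Let p_k ≥ 0 with ∑_k p_k = 1, let η > 0, G ≥ 0 and let E ≥ 1 be an integer. For each k let θ_k, g_k, ĝ_k ∈ H, γ_k > 0 and ε_k ≥ 0, and let θ* ∈ H; set θ̄ = ∑_k p_k θ_k. Assume: (i) ‖g_k‖ ≤ G for every k; (ii) ⟨θ_k − θ*, ĝ_k⟩ ≥ (γ_k/2)‖θ_k − θ*‖² − ε_k for every k; (iii) ∑_k p_k ‖θ̄ − θ_k‖² ≤ 8(E−1)²η²G². Then ‖θ̄ − η ∑_k p_k g_k − θ*‖² ≤ (1 − η min_k γ_k)‖θ̄ − θ*‖² + (8(E−1)² + 2)η²G² + 2η( ∑_k p_k ε_k + ∑_k p_k ‖θ_k − θ*‖ · ‖g_k − ĝ_k‖ ). -/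
open RealInnerProductSpace

theorem stmt_1 {H : Type*} [NormedAddCommGroup H] [InnerProductSpace ℝ H]
    {ι : Type*} [Fintype ι] [Nonempty ι]
    (p : ι → ℝ) (hp : ∀ k, 0 ≤ p k) (hp1 : ∑ k, p k = 1)
    (η G : ℝ) (hη : 0 < η) (hG : 0 ≤ G) (E : ℕ) (hE : 1 ≤ E)
    (θ g gstar : ι → H) (γ : ι → ℝ) (hγ : ∀ k, 0 < γ k) (ε : ι → ℝ) (hε : ∀ k, 0 ≤ ε k)
    (θs : H)
    (hg : ∀ k, ‖g k‖ ≤ G)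
    (hconv : ∀ k, (γ k / 2) * ‖θ k - θs‖ ^ 2 - ε k ≤ inner ℝ (θ k - θs) (gstar k))
    (hdrift : ∑ k, p k * ‖(∑ j, p j • θ j) - θ k‖ ^ 2 ≤
      8 * ((E : ℝ) - 1) ^ 2 * η ^ 2 * G ^ 2) :
    ‖(∑ k, p k • θ k) - η • (∑ k, p k • g k) - θs‖ ^ 2 ≤
      (1 - η * Finset.univ.inf' Finset.univ_nonempty γ) * ‖(∑ k, p k • θ k) - θs‖ ^ 2 +
        (8 * ((E : ℝ) - 1) ^ 2 + 2) * η ^ 2 * G ^ 2 +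
        2 * η * ((∑ k, p k * ε k) + ∑ k, p k * (‖θ k - θs‖ * ‖g k - gstar k‖)) := by
  classical
  set θbar : H := ∑ k, p k • θ k with hθbar
  set v : H := ∑ k, p k • g k with hv
  set a : H := θbar - θs with ha
  set m : ℝ := Finset.univ.inf' Finset.univ_nonempty γ with hm
  have hm_pos : 0 < m := by
    obtain ⟨k, _, hk⟩ := Finset.exists_mem_eq_inf' Finset.univ_nonempty γ
    rw [hm, hk]; exact hγ k
  have hm_le : ∀ k, m ≤ γ k := fun k => Finset.inf'_le _ (Finset.mem_univ k)
  -- ‖v‖ ≤ G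
  have hvG : ‖v‖ ≤ G := by
    calc ‖v‖ ≤ ∑ k, ‖p k • g k‖ := norm_sum_le _ _
      _ = ∑ k, p k * ‖g k‖ := by
          refine Finset.sum_congr rfl fun k _ => ?_
          rw [norm_smul, Real.norm_of_nonneg (hp k)]
      _ ≤ ∑ k, p k * G := Finset.sum_le_sum fun k _ =>
          mul_le_mul_of_nonneg_left (hg k) (hp k)
      _ = G := by rw [← Finset.sum_mul, hp1, one_mul]
  have hv2 : ‖v‖ ^ 2 ≤ G ^ 2 := by nlinarith [norm_nonneg v]
  -- Jensen : ‖a‖² ≤ ∑ pₖ ‖θₖ - θs‖²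
  have ha_sum : a = ∑ k, p k • (θ k - θs) := by
    rw [ha, hθbar]
    rw [Finset.sum_congr rfl (fun k _ => smul_sub (p k) (θ k) θs), Finset.sum_sub_distrib,
      ← Finset.sum_smul, hp1, one_smul]
  have hJ : ‖a‖ ^ 2 ≤ ∑ k, p k * ‖θ k - θs‖ ^ 2 := by
    have h1 : ‖a‖ ≤ ∑ k, p k * ‖θ k - θs‖ := by
      rw [ha_sum]
      calc ‖∑ k, p k • (θ k - θs)‖ ≤ ∑ k, ‖p k • (θ k - θs)‖ := norm_sum_le _ _
        _ = ∑ k, p k * ‖θ k - θs‖ := Finset.sum_congr rfl fun k _ => by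
            rw [norm_smul, Real.norm_of_nonneg (hp k)]
    have h2 : (∑ k, p k * ‖θ k - θs‖) ^ 2 ≤ ∑ k, p k * ‖θ k - θs‖ ^ 2 := by
      have hcs := Finset.sum_mul_sq_le_sq_mul_sq Finset.univ
        (fun k => Real.sqrt (p k)) (fun k => Real.sqrt (p k) * ‖θ k - θs‖)
      have e1 : ∀ k : ι, Real.sqrt (p k) * (Real.sqrt (p k) * ‖θ k - θs‖)
          = p k * ‖θ k - θs‖ := fun k => by
        rw [← mul_assoc, Real.mul_self_sqrt (hp k)]
      have e2 : ∀ k : ι, Real.sqrt (p k) ^ 2 = p k := fun k => Real.sq_sqrt (hp k)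
      have e3 : ∀ k : ι, (Real.sqrt (p k) * ‖θ k - θs‖) ^ 2 = p k * ‖θ k - θs‖ ^ 2 :=
        fun k => by rw [mul_pow, Real.sq_sqrt (hp k)]
      rw [Finset.sum_congr rfl (fun k _ => e1 k), Finset.sum_congr rfl (fun k _ => e2 k),
        Finset.sum_congr rfl (fun k _ => e3 k), hp1, one_mul] at hcs
      exact hcs
    have h0 : 0 ≤ ‖a‖ := norm_nonneg a
    nlinarith [h1, h2, h0]
  -- per-k bound
  have hka : ∀ k : ι, -(2 * η) * ⟪a, g k⟫ ≤
      ‖θbar - θ k‖ ^ 2 + η ^ 2 * G ^ 2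
        + 2 * η * (‖θ k - θs‖ * ‖g k - gstar k‖ + ε k) - η * m * ‖θ k - θs‖ ^ 2 := by
    intro k
    have hdec : ⟪a, g k⟫ = ⟪θbar - θ k, g k⟫ + ⟪θ k - θs, g k - gstar k⟫
        + ⟪θ k - θs, gstar k⟫ := by
      have : a = (θbar - θ k) + (θ k - θs) := by rw [ha]; abel
      rw [this, inner_add_left, inner_sub_right]
      ring
    have h1 : -(‖θbar - θ k‖ * ‖g k‖) ≤ ⟪θbar - θ k, g k⟫ :=
      neg_le_of_abs_le (abs_real_inner_le_norm _ _)
    have h1' : ‖θbar - θ k‖ * ‖g k‖ ≤ ‖θbar - θ k‖ * G :=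
      mul_le_mul_of_nonneg_left (hg k) (norm_nonneg _)
    have hamgm : 2 * η * (‖θbar - θ k‖ * G) ≤ ‖θbar - θ k‖ ^ 2 + η ^ 2 * G ^ 2 := by
      nlinarith [sq_nonneg (‖θbar - θ k‖ - η * G)]
    have h2 : -(‖θ k - θs‖ * ‖g k - gstar k‖) ≤ ⟪θ k - θs, g k - gstar k⟫ :=
      neg_le_of_abs_le (abs_real_inner_le_norm _ _)
    have h3 : (γ k / 2) * ‖θ k - θs‖ ^ 2 - ε k ≤ ⟪θ k - θs, gstar k⟫ := hconv k
    have h4 : m * ‖θ k - θs‖ ^ 2 ≤ γ k * ‖θ k - θs‖ ^ 2 :=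
      mul_le_mul_of_nonneg_right (hm_le k) (sq_nonneg _)
    rw [hdec]
    nlinarith [h1, h1', h2, h3, h4, hη.le]
  -- sum of per-k bounds
  have hsum : ∑ k, p k * (-(2 * η) * ⟪a, g k⟫) ≤
      ∑ k, p k * (‖θbar - θ k‖ ^ 2 + η ^ 2 * G ^ 2
        + 2 * η * (‖θ k - θs‖ * ‖g k - gstar k‖ + ε k) - η * m * ‖θ k - θs‖ ^ 2) :=
    Finset.sum_le_sum fun k _ => mul_le_mul_of_nonneg_left (hka k) (hp k)
  have hinner : ⟪a, v⟫ = ∑ k, p k * ⟪a, g k⟫ := by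
    rw [hv, inner_sum]
    exact Finset.sum_congr rfl fun k _ => real_inner_smul_right _ _ _
  have hL : ∑ k, p k * (-(2 * η) * ⟪a, g k⟫) = -(2 * η) * ⟪a, v⟫ := by
    rw [hinner, Finset.mul_sum]
    exact Finset.sum_congr rfl fun k _ => by ring
  have hR : ∑ k, p k * (‖θbar - θ k‖ ^ 2 + η ^ 2 * G ^ 2
        + 2 * η * (‖θ k - θs‖ * ‖g k - gstar k‖ + ε k) - η * m * ‖θ k - θs‖ ^ 2)
      = (∑ k, p k * ‖θbar - θ k‖ ^ 2) + η ^ 2 * G ^ 2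
        + 2 * η * ((∑ k, p k * ε k) + ∑ k, p k * (‖θ k - θs‖ * ‖g k - gstar k‖))
        - η * m * ∑ k, p k * ‖θ k - θs‖ ^ 2 := by
    have e : ∀ k : ι, p k * (‖θbar - θ k‖ ^ 2 + η ^ 2 * G ^ 2
        + 2 * η * (‖θ k - θs‖ * ‖g k - gstar k‖ + ε k) - η * m * ‖θ k - θs‖ ^ 2)
        = p k * ‖θbar - θ k‖ ^ 2 + η ^ 2 * G ^ 2 * p k
          + 2 * η * (p k * ε k) + 2 * η * (p k * (‖θ k - θs‖ * ‖g k - gstar k‖))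
          - η * m * (p k * ‖θ k - θs‖ ^ 2) := fun k => by ring
    simp only [e, Finset.sum_add_distrib, Finset.sum_sub_distrib, ← Finset.mul_sum, hp1]
    ring
  -- expand the norm
  have hexp : ‖θbar - η • v - θs‖ ^ 2 = ‖a‖ ^ 2 - 2 * η * ⟪a, v⟫ + η ^ 2 * ‖v‖ ^ 2 := by
    have : θbar - η • v - θs = a - η • v := by rw [ha]; abel
    rw [this, @norm_sub_sq_real, real_inner_smul_right, norm_smul,
      Real.norm_of_nonneg hη.le, mul_pow]
    ring
  have hdrift' : ∑ k, p k * ‖θbar - θ k‖ ^ 2 ≤ 8 * ((E : ℝ) - 1) ^ 2 * η ^ 2 * G ^ 2 :=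
    hdrift
  have hmain : -(2 * η) * ⟪a, v⟫ ≤
      8 * ((E : ℝ) - 1) ^ 2 * η ^ 2 * G ^ 2 + η ^ 2 * G ^ 2
        + 2 * η * ((∑ k, p k * ε k) + ∑ k, p k * (‖θ k - θs‖ * ‖g k - gstar k‖))
        - η * m * ‖a‖ ^ 2 := by
    have hηm : 0 ≤ η * m := mul_nonneg hη.le hm_pos.le
    have := hsum
    rw [hL, hR] at this
    linarith [mul_le_mul_of_nonneg_left hJ hηm]
  rw [hexp]
  have hη2 : 0 ≤ η ^ 2 := sq_nonneg η
  linarith [mul_le_mul_of_nonneg_left hv2 hη2, hmain]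
end

section
/- Let H be a real inner product space and let k range over a nonempty finite index set with weights p_k ≥ 0, ∑_k p_k = 1. Let G ≥ 0, let E ≥ 1 and t₀ ≤ t be integers with t − t₀ ≤ E − 1, and let η : {t₀, …, t} → ℝ be positive and nonincreasing with η(t₀) ≤ 2η(t). Let θ₀ ∈ H, and for each k and each i ∈ {t₀, …, t−1} let g_{k,i} ∈ H with ‖g_{k,i}‖ ≤ G. Set θ_k = θ₀ − ∑_{i=t₀}^{t−1} η(i) g_{k,i} and θ̄ = ∑_k p_k θ_k. Then ∑_k p_k ‖θ̄ − θ_k‖² ≤ 8(E−1)² η(t)² G². -/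
open Finset

lemma variance_le {H : Type*} [NormedAddCommGroup H] [InnerProductSpace ℝ H]
    {ι : Type*} [Fintype ι] (p : ι → ℝ) (hp : ∀ k, 0 ≤ p k) (hp1 : ∑ k, p k = 1)
    (x : ι → H) :
    ∑ k, p k * ‖(∑ j, p j • x j) - x k‖ ^ 2 ≤ ∑ k, p k * ‖x k‖ ^ 2 := by
  set m : H := ∑ j, p j • x j with hm
  have expand : ∀ k, ‖m - x k‖ ^ 2 = ‖m‖ ^ 2 - 2 * inner ℝ m (x k) + ‖x k‖ ^ 2 := by
    intro k
    exact norm_sub_sq_real m (x k)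
  have : ∑ k, p k * ‖m - x k‖ ^ 2
      = ‖m‖ ^ 2 - 2 * ‖m‖ ^ 2 + ∑ k, p k * ‖x k‖ ^ 2 := by
    simp_rw [expand]
    have h1 : ∑ k, p k * (‖m‖ ^ 2 - 2 * inner ℝ m (x k) + ‖x k‖ ^ 2)
        = (∑ k, p k) * ‖m‖ ^ 2 - 2 * (∑ k, p k * inner ℝ m (x k)) + ∑ k, p k * ‖x k‖ ^ 2 := by
      have h0 : ∀ k, p k * (‖m‖ ^ 2 - 2 * (inner ℝ m (x k) : ℝ) + ‖x k‖ ^ 2)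
          = p k * ‖m‖ ^ 2 - 2 * (p k * inner ℝ m (x k)) + p k * ‖x k‖ ^ 2 := fun k => by ring
      simp_rw [h0]
      rw [Finset.sum_add_distrib, Finset.sum_sub_distrib, ← Finset.sum_mul, ← Finset.mul_sum]
    have h2 : ∑ k, p k * (inner ℝ m (x k) : ℝ) = ‖m‖ ^ 2 := by
      have : ∑ k, p k * (inner ℝ m (x k) : ℝ) = inner ℝ m m := by
        rw [hm]
        rw [inner_sum]
        congr 1; ext k
        rw [real_inner_smul_right]
      rw [this, real_inner_self_eq_norm_sq]
    rw [h1, h2, hp1, one_mul]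
  rw [this]
  nlinarith [sq_nonneg ‖m‖]

theorem stmt_2 {H : Type*} [NormedAddCommGroup H] [InnerProductSpace ℝ H]
    {ι : Type*} [Fintype ι] [Nonempty ι]
    (p : ι → ℝ) (hp : ∀ k, 0 ≤ p k) (hp1 : ∑ k, p k = 1)
    (G : ℝ) (hG : 0 ≤ G) (E t₀ t : ℕ) (hE : 1 ≤ E) (ht₀ : t₀ ≤ t)
    (hEt : t - t₀ ≤ E - 1)
    (η : ℕ → ℝ) (hηpos : ∀ i, t₀ ≤ i → i ≤ t → 0 < η i)
    (hηmono : ∀ i j, t₀ ≤ i → i ≤ j → j ≤ t → η j ≤ η i)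
    (hη2 : η t₀ ≤ 2 * η t)
    (θ₀ : H) (g : ι → ℕ → H) (hg : ∀ k i, t₀ ≤ i → i < t → ‖g k i‖ ≤ G)
    (θ : ι → H) (hθ : ∀ k, θ k = θ₀ - ∑ i ∈ Finset.Ico t₀ t, η i • g k i) :
    ∑ k, p k * ‖(∑ j, p j • θ j) - θ k‖ ^ 2 ≤
      8 * ((E : ℝ) - 1) ^ 2 * (η t) ^ 2 * G ^ 2 := by
  set x : ι → H := fun k => θ k - θ₀ with hx
  have hmx : (∑ j, p j • θ j) = (∑ j, p j • x j) + θ₀ := by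
    simp only [hx, smul_sub, Finset.sum_sub_distrib, ← Finset.sum_smul, hp1, one_smul]
    abel
  have hrw : ∀ k, (∑ j, p j • θ j) - θ k = (∑ j, p j • x j) - x k := by
    intro k; rw [hmx]; simp [hx]; abel
  have hηt : 0 < η t := hηpos t ht₀ le_rfl
  -- bound on each ‖x k‖
  have hxb : ∀ k, ‖x k‖ ≤ 2 * ((E : ℝ) - 1) * η t * G := by
    intro k
    have : x k = -(∑ i ∈ Finset.Ico t₀ t, η i • g k i) := by
      rw [hx]; simp [hθ k]
    rw [this, norm_neg]
    calc ‖∑ i ∈ Finset.Ico t₀ t, η i • g k i‖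
        ≤ ∑ i ∈ Finset.Ico t₀ t, ‖η i • g k i‖ := norm_sum_le _ _
      _ ≤ ∑ i ∈ Finset.Ico t₀ t, 2 * η t * G := by
          apply Finset.sum_le_sum
          intro i hi
          rw [Finset.mem_Ico] at hi
          rw [norm_smul, Real.norm_eq_abs, abs_of_pos (hηpos i hi.1 (le_of_lt hi.2))]
          have h1 : η i ≤ η t₀ := hηmono t₀ i le_rfl hi.1 (le_of_lt hi.2)
          have hgb := hg k i hi.1 hi.2
          have hηi : 0 ≤ η i := le_of_lt (hηpos i hi.1 (le_of_lt hi.2))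
          have : η i ≤ 2 * η t := le_trans h1 hη2
          nlinarith [norm_nonneg (g k i)]
      _ = (t - t₀ : ℕ) * (2 * η t * G) := by
          rw [Finset.sum_const, Nat.card_Ico, nsmul_eq_mul]
      _ ≤ ((E : ℝ) - 1) * (2 * η t * G) := by
          apply mul_le_mul_of_nonneg_right
          · have : ((t - t₀ : ℕ) : ℝ) ≤ ((E - 1 : ℕ) : ℝ) := Nat.cast_le.mpr hEt
            calc ((t - t₀ : ℕ) : ℝ) ≤ ((E - 1 : ℕ) : ℝ) := this
              _ = (E : ℝ) - 1 := by
                  rw [Nat.cast_sub hE]; norm_num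
          · positivity
      _ = 2 * ((E : ℝ) - 1) * η t * G := by ring
  have key := variance_le p hp hp1 x
  have hE1 : (0:ℝ) ≤ (E : ℝ) - 1 := by
    have : (1:ℝ) ≤ (E : ℝ) := by exact_mod_cast hE
    linarith
  calc ∑ k, p k * ‖(∑ j, p j • θ j) - θ k‖ ^ 2
      = ∑ k, p k * ‖(∑ j, p j • x j) - x k‖ ^ 2 := by
        congr 1; ext k; rw [hrw k]
    _ ≤ ∑ k, p k * ‖x k‖ ^ 2 := key
    _ ≤ ∑ k, p k * (2 * ((E : ℝ) - 1) * η t * G) ^ 2 := by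
        apply Finset.sum_le_sum
        intro k _
        apply mul_le_mul_of_nonneg_left _ (hp k)
        have := hxb k
        have h0 : (0:ℝ) ≤ ‖x k‖ := norm_nonneg _
        nlinarith
    _ = (2 * ((E : ℝ) - 1) * η t * G) ^ 2 := by
        rw [← Finset.sum_mul, hp1, one_mul]
    _ ≤ 8 * ((E : ℝ) - 1) ^ 2 * (η t) ^ 2 * G ^ 2 := by nlinarith [sq_nonneg (((E:ℝ)-1) * η t * G)]
end

section
/- Let H be a real inner product space and let k range over a nonempty finite index set with weights p_k ≥ 0, ∑_k p_k = 1. Let G ≥ 0, let E ≥ 1 and t₀ ≤ t be integers with t − t₀ + 1 ≤ E, and let η : {t₀, …, t} → ℝ be positive and nonincreasing with η(t₀) ≤ 2η(t). Let θ₀ ∈ H, and for each k and each i ∈ {t₀, …, t} let g_{k,i} ∈ H with ‖g_{k,i}‖ ≤ G. Set v_k = θ₀ − ∑_{i=t₀}^{t} η(i) g_{k,i} and v̄ = ∑_k p_k v_k. Then ∑_k p_k ‖v_k − v̄‖² ≤ 4 E² η(t)² G². -/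
theorem stmt_4 {H : Type*} [NormedAddCommGroup H] [InnerProductSpace ℝ H]
    {ι : Type*} [Fintype ι] [Nonempty ι]
    (p : ι → ℝ) (hp : ∀ k, 0 ≤ p k) (hp1 : ∑ k, p k = 1)
    (G : ℝ) (hG : 0 ≤ G) (E t₀ t : ℕ) (hE : 1 ≤ E) (ht₀ : t₀ ≤ t)
    (hEt : t - t₀ + 1 ≤ E)
    (η : ℕ → ℝ) (hηpos : ∀ i, t₀ ≤ i → i ≤ t → 0 < η i)
    (hηmono : ∀ i j, t₀ ≤ i → i ≤ j → j ≤ t → η j ≤ η i)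
    (hη2 : η t₀ ≤ 2 * η t)
    (θ₀ : H) (g : ι → ℕ → H) (hg : ∀ k i, t₀ ≤ i → i ≤ t → ‖g k i‖ ≤ G)
    (v : ι → H) (hv : ∀ k, v k = θ₀ - ∑ i ∈ Finset.Icc t₀ t, η i • g k i) :
    ∑ k, p k * ‖v k - ∑ j, p j • v j‖ ^ 2 ≤
      4 * (E : ℝ) ^ 2 * (η t) ^ 2 * G ^ 2 := by
  set a : ι → H := fun k => v k - θ₀ with ha
  set b : H := ∑ j, p j • a j with hb
  have hηt : 0 < η t := hηpos t ht₀ le_rfl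
  -- bound on ‖a k‖
  have hak : ∀ k, ‖a k‖ ≤ 2 * E * η t * G := by
    intro k
    have : a k = -(∑ i ∈ Finset.Icc t₀ t, η i • g k i) := by
      simp [ha, hv k]
    rw [this, norm_neg]
    calc ‖∑ i ∈ Finset.Icc t₀ t, η i • g k i‖
        ≤ ∑ i ∈ Finset.Icc t₀ t, ‖η i • g k i‖ := norm_sum_le _ _
      _ ≤ ∑ _i ∈ Finset.Icc t₀ t, (2 * η t) * G := by
          apply Finset.sum_le_sum
          intro i hi
          rw [Finset.mem_Icc] at hi
          rw [norm_smul, Real.norm_eq_abs, abs_of_pos (hηpos i hi.1 hi.2)]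
          have h1 : η i ≤ 2 * η t := le_trans (hηmono t₀ i le_rfl hi.1 hi.2) hη2
          exact mul_le_mul h1 (hg k i hi.1 hi.2) (norm_nonneg _)
            (by positivity)
      _ = ((t - t₀ + 1 : ℕ) : ℝ) * ((2 * η t) * G) := by
          rw [Finset.sum_const, Nat.card_Icc, nsmul_eq_mul]
          congr 2
          omega
      _ ≤ (E : ℝ) * ((2 * η t) * G) := by
          apply mul_le_mul_of_nonneg_right _ (by positivity)
          exact_mod_cast hEt
      _ = 2 * E * η t * G := by ring
  -- rewrite v k - v̄ as a k - b
  have hvb : ∀ k, v k - ∑ j, p j • v j = a k - b := by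
    intro k
    have : ∑ j, p j • v j = b + θ₀ := by
      rw [hb]
      simp only [ha, smul_sub]
      rw [Finset.sum_sub_distrib, ← Finset.sum_smul, hp1, one_smul]
      abel
    rw [this]; show v k - (b + θ₀) = (v k - θ₀) - b
    rw [sub_add_eq_sub_sub, sub_right_comm]
  simp only [hvb]
  -- variance inequality
  have key : ∑ k, p k * ‖a k - b‖ ^ 2 = (∑ k, p k * ‖a k‖ ^ 2) - ‖b‖ ^ 2 := by
    have expand : ∀ k, ‖a k - b‖ ^ 2
        = ‖a k‖ ^ 2 - 2 * inner ℝ (a k) b + ‖b‖ ^ 2 := fun k =>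
      norm_sub_sq_real (a k) b
    simp only [expand, mul_sub, mul_add]
    rw [Finset.sum_add_distrib, Finset.sum_sub_distrib, ← Finset.sum_mul,
      hp1, one_mul]
    have : ∑ k, p k * (2 * inner ℝ (a k) b) = 2 * ‖b‖ ^ 2 := by
      have : ∑ k, p k * (2 * inner ℝ (a k) b)
          = 2 * inner ℝ (∑ k, p k • a k) b := by
        rw [sum_inner, Finset.mul_sum]
        congr 1
        ext k
        rw [real_inner_smul_left]
        ring
      rw [this, ← hb, real_inner_self_eq_norm_sq]
    rw [this]
    ring
  rw [key]
  have h1 : (∑ k, p k * ‖a k‖ ^ 2) - ‖b‖ ^ 2 ≤ ∑ k, p k * ‖a k‖ ^ 2 := by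
    nlinarith [sq_nonneg ‖b‖]
  refine le_trans h1 ?_
  calc ∑ k, p k * ‖a k‖ ^ 2 ≤ ∑ k, p k * (2 * E * η t * G) ^ 2 := by
        apply Finset.sum_le_sum
        intro k _
        exact mul_le_mul_of_nonneg_left
          (pow_le_pow_left₀ (norm_nonneg _) (hak k) 2) (hp k)
    _ = (2 * E * η t * G) ^ 2 := by rw [← Finset.sum_mul, hp1, one_mul]
    _ = 4 * (E : ℝ) ^ 2 * (η t) ^ 2 * G ^ 2 := by ring
end

section
/- Let N ≥ 1 be an integer, let b > (3 + √21)/4, α > 0, C ≥ 0, θ_min > 0, and let θ₁ ≥ θ_min and θ₂ ≥ θ_min. Let λ_1, …, λ_N be nonnegative reals satisfying λ_j ≤ C · j^{−2b(2b−1)/(4b+3)} · N^{1+α/2} for every j ∈ {1, …, N}, and set ρ = (2+α)(4b+3)/(4b(2b−1)). Then ∑_{j=1}^N λ_j²/(θ₁λ_j + θ₂)² ≤ (N^ρ + 1)/θ_min² + C²(4b+3)N^ρ/(θ_min²(8b² − 8b − 3)). -/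
lemma step_ineq (s x : ℝ) (hs : 1 ≤ s) (hx : 1 ≤ x) :
    s * (x + 1) ^ (-(s + 1)) ≤ x ^ (-s) - (x + 1) ^ (-s) := by
  have hx0 : (0:ℝ) < x := by linarith
  have hy0 : (0:ℝ) < x + 1 := by linarith
  have hix : (0:ℝ) ≤ 1/x := by positivity
  have hB : 1 + s * (1/x) ≤ (1 + 1/x) ^ s :=
    one_add_mul_self_le_rpow_one_add (by linarith) hs
  have h2 : 1 + s / (x+1) ≤ (1 + 1/x) ^ s := by
    refine le_trans ?_ hB
    have : s / (x+1) ≤ s * (1/x) := by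
      rw [mul_one_div]
      apply div_le_div_of_nonneg_left (by linarith) hx0 (by linarith)
    linarith
  have hfrac : (1 : ℝ) + 1/x = (x+1)/x := by field_simp
  have h3 : ((x+1)/x) ^ s = (x+1)^s * x^(-s) := by
    rw [Real.div_rpow (by positivity) hx0.le, Real.rpow_neg hx0.le, div_eq_mul_inv]
  have h4 : 1 + s/(x+1) ≤ (x+1)^s * x^(-s) := by
    rw [← h3, ← hfrac]; exact h2
  have h5 : (1 + s/(x+1)) * (x+1)^(-s) ≤ x^(-s) := by
    have := mul_le_mul_of_nonneg_right h4 (le_of_lt (Real.rpow_pos_of_pos hy0 (-s)))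
    calc (1 + s/(x+1)) * (x+1)^(-s) ≤ (x+1)^s * x^(-s) * (x+1)^(-s) := this
    _ = x^(-s) * ((x+1)^s * (x+1)^(-s)) := by ring
    _ = x^(-s) := by
        rw [← Real.rpow_add hy0]
        simp
  have h6 : s/(x+1) * (x+1)^(-s) = s * (x+1)^(-(s+1)) := by
    rw [div_mul_eq_mul_div, mul_div_assoc]
    congr 1
    rw [Real.rpow_neg hy0.le, Real.rpow_neg hy0.le, Real.rpow_add hy0, Real.rpow_one]
    field_simp
  nlinarith [h5, h6]

lemma telescope (f : ℕ → ℝ) (M N : ℕ) (h : M ≤ N) :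
    ∑ j ∈ Finset.Icc (M+1) N, (f (j-1) - f j) = f M - f N := by
  induction N, h using Nat.le_induction with
  | base => simp
  | succ n hn ih =>
      rw [Finset.sum_Icc_succ_top (by omega)]
      simp only [ih, Nat.add_sub_cancel]
      ring

set_option maxHeartbeats 1600000 in
theorem stmt_8 (N : ℕ) (hN : 1 ≤ N) (b α C θmin θ₁ θ₂ : ℝ)
    (hb : (3 + Real.sqrt 21) / 4 < b) (hα : 0 < α) (hC : 0 ≤ C) (hθmin : 0 < θmin)
    (h1 : θmin ≤ θ₁) (h2 : θmin ≤ θ₂)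
    (lam : ℕ → ℝ) (hlam0 : ∀ j ∈ Finset.Icc 1 N, 0 ≤ lam j)
    (hlam : ∀ j ∈ Finset.Icc 1 N,
      lam j ≤ C * (j : ℝ) ^ (-(2 * b * (2 * b - 1)) / (4 * b + 3)) *
        (N : ℝ) ^ (1 + α / 2)) :
    ∑ j ∈ Finset.Icc 1 N, (lam j) ^ 2 / (θ₁ * lam j + θ₂) ^ 2 ≤
      ((N : ℝ) ^ ((2 + α) * (4 * b + 3) / (4 * b * (2 * b - 1))) + 1) / θmin ^ 2 +
        C ^ 2 * (4 * b + 3) *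
          (N : ℝ) ^ ((2 + α) * (4 * b + 3) / (4 * b * (2 * b - 1))) /
          (θmin ^ 2 * (8 * b ^ 2 - 8 * b - 3)) := by
  have ht0 : (0:ℝ) ≤ Real.sqrt 21 := Real.sqrt_nonneg 21
  have ht2 : Real.sqrt 21 ^ 2 = 21 := Real.sq_sqrt (by norm_num)
  have ht4 : (4:ℝ) ≤ Real.sqrt 21 := by nlinarith
  have hb1 : (1:ℝ) < b := by nlinarith
  have hb2 : (0:ℝ) < 2*b - 1 := by linarith
  have hb3 : (0:ℝ) < 4*b + 3 := by linarith
  have hquad : 0 < 4*b^2 - 6*b - 3 := by nlinarith [sq_nonneg (4*b - 3 - Real.sqrt 21)]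
  have hden : 0 < 8*b^2 - 8*b - 3 := by nlinarith
  set s : ℝ := (8*b^2 - 8*b - 3) / (4*b + 3) with hs_def
  have hs1 : 1 ≤ s := by
    rw [hs_def, le_div_iff₀ hb3]; nlinarith
  have hs0 : 0 < s := lt_of_lt_of_le one_pos hs1
  set e : ℝ := -(2 * b * (2 * b - 1)) / (4 * b + 3) with he_def
  have hes : e * 2 = -(s + 1) := by rw [he_def, hs_def]; field_simp; ring
  set ρ : ℝ := (2 + α) * (4 * b + 3) / (4 * b * (2 * b - 1)) with hρ_def
  have hρ0 : 0 < ρ := by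
    rw [hρ_def]; apply div_pos (by nlinarith) (by nlinarith)
  have hρs : ρ * (s + 1) = 2 + α := by
    rw [hρ_def, hs_def]; field_simp; ring
  have hN1 : (1:ℝ) ≤ (N:ℝ) := by exact_mod_cast hN
  have hN0 : (0:ℝ) < (N:ℝ) := by linarith
  set R : ℝ := (N:ℝ) ^ ρ with hR_def
  have hR1 : (1:ℝ) ≤ R := Real.one_le_rpow hN1 hρ0.le
  have hR0 : (0:ℝ) < R := by linarith
  obtain ⟨M, hM_def⟩ : ∃ M, M = min ⌈R⌉₊ N := ⟨_, rfl⟩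
  have hMN : M ≤ N := by rw [hM_def]; exact min_le_right _ _
  -- per-term bound 1
  have hterm1 : ∀ j ∈ Finset.Icc 1 N,
      (lam j)^2 / (θ₁ * lam j + θ₂)^2 ≤ 1 / θmin^2 := by
    intro j hj
    have hl0 := hlam0 j hj
    have hD : θmin * lam j ≤ θ₁ * lam j + θ₂ := by nlinarith
    have hDpos : 0 < θ₁ * lam j + θ₂ := by nlinarith
    rw [div_le_div_iff₀ (by positivity) (by positivity)]
    have hsq : (θmin * lam j)^2 ≤ (θ₁ * lam j + θ₂)^2 :=
      pow_le_pow_left₀ (by positivity) hD 2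
    have hring : lam j^2 * θmin^2 = (θmin * lam j)^2 := by ring
    linarith
  -- per-term bound 2
  have hterm2 : ∀ j ∈ Finset.Icc 1 N,
      (lam j)^2 / (θ₁ * lam j + θ₂)^2 ≤ (lam j)^2 / θmin^2 := by
    intro j hj
    have hl0 := hlam0 j hj
    have hDpos : 0 < θ₁ * lam j + θ₂ := by nlinarith
    apply div_le_div_of_nonneg_left (by positivity) (by positivity)
    have hD2 : θmin ≤ θ₁ * lam j + θ₂ := by nlinarith
    exact pow_le_pow_left₀ hθmin.le hD2 2
  -- split the sum
  have hsplit : Finset.Icc 1 N = Finset.Icc 1 M ∪ Finset.Icc (M+1) N := by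
    ext x
    simp only [Finset.mem_Icc, Finset.mem_union]
    omega
  have hdisj : Disjoint (Finset.Icc 1 M) (Finset.Icc (M+1) N) := by
    apply Finset.disjoint_left.mpr
    intro a ha hb'
    simp only [Finset.mem_Icc] at ha hb'
    omega
  rw [hsplit, Finset.sum_union hdisj]
  -- head bound
  have hMle : (M:ℝ) ≤ R + 1 := by
    have h1' : (M:ℝ) ≤ (⌈R⌉₊:ℝ) := by
      exact_mod_cast Nat.cast_le.mpr (hM_def ▸ min_le_left _ _)
    have h2' : (⌈R⌉₊:ℝ) < R + 1 := Nat.ceil_lt_add_one hR0.le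
    linarith
  have hhead : ∑ j ∈ Finset.Icc 1 M, (lam j)^2 / (θ₁ * lam j + θ₂)^2 ≤ (R + 1) / θmin^2 := by
    calc ∑ j ∈ Finset.Icc 1 M, (lam j)^2 / (θ₁ * lam j + θ₂)^2
        ≤ ∑ _j ∈ Finset.Icc 1 M, 1 / θmin^2 := by
          apply Finset.sum_le_sum
          intro j hj
          apply hterm1
          simp only [Finset.mem_Icc] at hj ⊢
          omega
      _ = (M : ℝ) * (1 / θmin^2) := by
          rw [Finset.sum_const, Nat.card_Icc]
          simp
      _ ≤ (R + 1) / θmin^2 := by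
          rw [mul_one_div]
          apply div_le_div_of_nonneg_right hMle (by positivity)
  -- tail bound
  have htail : ∑ j ∈ Finset.Icc (M+1) N, (lam j)^2 / (θ₁ * lam j + θ₂)^2 ≤
      C^2 * (4*b+3) * R / (θmin^2 * (8*b^2 - 8*b - 3)) := by
    rcases le_or_gt N ⌈R⌉₊ with hcase | hcase
    · have hMeq : M = N := by rw [hM_def, min_eq_right hcase]
      rw [hMeq, Finset.Icc_eq_empty (by omega), Finset.sum_empty]
      positivity
    · have hMceil : M = ⌈R⌉₊ := by rw [hM_def, min_eq_left hcase.le]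
      have hRM : R ≤ (M:ℝ) := by rw [hMceil]; exact Nat.le_ceil R
      have hceil1 : 1 ≤ ⌈R⌉₊ := Nat.one_le_ceil_iff.mpr hR0
      have hM1 : 1 ≤ M := by omega
      set f : ℕ → ℝ := fun n => (n:ℝ)^(-s) with hf_def
      set c : ℝ := C^2 * (N:ℝ)^((2:ℝ)+α) / θmin^2 with hc_def
      have hc0 : 0 ≤ c := by rw [hc_def]; positivity
      calc ∑ j ∈ Finset.Icc (M+1) N, (lam j)^2 / (θ₁ * lam j + θ₂)^2
          ≤ ∑ j ∈ Finset.Icc (M+1) N, (c / s) * (f (j-1) - f j) := by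
            apply Finset.sum_le_sum
            intro j hj
            simp only [Finset.mem_Icc] at hj
            have hj2 : 2 ≤ j := by omega
            have hjN : j ∈ Finset.Icc 1 N := by
              simp only [Finset.mem_Icc]; omega
            have hl0 := hlam0 j hjN
            have hjpos : (0:ℝ) < (j:ℝ) := by positivity
            -- lam j ^ 2 bound
            have hb2' : (lam j)^2 ≤ (C * (j:ℝ)^e * (N:ℝ)^(1+α/2))^2 :=
              pow_le_pow_left₀ hl0 (hlam j hjN) 2
            have hexp : (C * (j:ℝ)^e * (N:ℝ)^(1+α/2))^2
                = C^2 * (j:ℝ)^(-(s+1)) * (N:ℝ)^((2:ℝ)+α) := by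
              rw [mul_pow, mul_pow, ← Real.rpow_natCast ((j:ℝ)^e) 2,
                ← Real.rpow_natCast ((N:ℝ)^(1+α/2)) 2,
                ← Real.rpow_mul (le_of_lt hjpos), ← Real.rpow_mul hN0.le]
              norm_num
              rw [hes, show ((1:ℝ) + α / 2) * 2 = 2 + α by ring]
              ring
            -- step inequality
            have hx1 : (1:ℝ) ≤ ((j-1:ℕ):ℝ) := by
              have : (1:ℕ) ≤ j - 1 := by omega
              exact_mod_cast this
            have hcast : ((j-1:ℕ):ℝ) + 1 = (j:ℝ) := by
              have : (j - 1 + 1 : ℕ) = j := by omega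
              exact_mod_cast congrArg (Nat.cast : ℕ → ℝ) this
            have hstep := step_ineq s ((j-1:ℕ):ℝ) hs1 hx1
            rw [hcast] at hstep
            have hstep' : (j:ℝ)^(-(s+1)) ≤ (f (j-1) - f j) / s := by
              rw [le_div_iff₀ hs0, hf_def]
              simpa [mul_comm] using hstep
            -- combine
            calc (lam j)^2 / (θ₁ * lam j + θ₂)^2
                ≤ (lam j)^2 / θmin^2 := hterm2 j hjN
              _ ≤ (C * (j:ℝ)^e * (N:ℝ)^(1+α/2))^2 / θmin^2 := by
                  apply div_le_div_of_nonneg_right hb2' (by positivity)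
              _ = c * (j:ℝ)^(-(s+1)) := by
                  rw [hexp, hc_def]; ring
              _ ≤ c * ((f (j-1) - f j) / s) := by
                  exact mul_le_mul_of_nonneg_left hstep' hc0
              _ = (c / s) * (f (j-1) - f j) := by ring
        _ = (c / s) * (f M - f N) := by
            rw [← Finset.mul_sum, telescope f M N hMN]
        _ ≤ (c / s) * R^(-s) := by
            apply mul_le_mul_of_nonneg_left ?_ (by positivity)
            have hfN : 0 ≤ f N := by
              rw [hf_def]; positivity
            have hfM : f M ≤ R^(-s) := by
              rw [hf_def]
              exact Real.rpow_le_rpow_of_nonpos hR0 hRM (by linarith)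
            linarith
        _ = C^2 * (4*b+3) * R / (θmin^2 * (8*b^2 - 8*b - 3)) := by
            have hNR : (N:ℝ)^((2:ℝ)+α) * R^(-s) = R := by
              rw [hR_def, ← Real.rpow_mul hN0.le, ← Real.rpow_add hN0]
              congr 1
              linear_combination (-1 : ℝ) * hρs
            calc (c / s) * R^(-s)
                = (C^2 / θmin^2 / s) * ((N:ℝ)^((2:ℝ)+α) * R^(-s)) := by
                  rw [hc_def]; ring
              _ = (C^2 / θmin^2 / s) * R := by rw [hNR]
              _ = C^2 * (4*b+3) * R / (θmin^2 * (8*b^2 - 8*b - 3)) := by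
                  rw [hs_def]
                  field_simp
  calc ∑ j ∈ Finset.Icc 1 M, (lam j)^2 / (θ₁ * lam j + θ₂)^2 +
        ∑ j ∈ Finset.Icc (M+1) N, (lam j)^2 / (θ₁ * lam j + θ₂)^2
      ≤ (R + 1) / θmin^2 + C^2 * (4*b+3) * R / (θmin^2 * (8*b^2 - 8*b - 3)) :=
        add_le_add hhead htail
    _ = ((N:ℝ) ^ ρ + 1) / θmin ^ 2 +
        C ^ 2 * (4 * b + 3) * (N:ℝ) ^ ρ / (θmin ^ 2 * (8 * b ^ 2 - 8 * b - 3)) := by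
        rw [hR_def]
end

section
/- Let N ≥ 1 be an integer, let b > (3 + √21)/4, α > 0, C ≥ 0, θ_min > 0, and let θ₁ ≥ θ_min and θ₂ ≥ θ_min. Let λ_1, …, λ_N be nonnegative reals satisfying λ_j ≤ C · j^{−2b(2b−1)/(4b+3)} · N^{1+α/2} for every j ∈ {1, …, N}, and set ρ = (2+α)(4b+3)/(4b(2b−1)). Then ∑_{j=1}^N λ_j/(θ₁λ_j + θ₂)² ≤ (N^ρ + 1)/θ_min² + C(4b+3)N^ρ/(θ_min²(4b² − 6b − 3)). -/
open Finset

private lemma aux_bern {x q : ℝ} (hx0 : 0 ≤ x) (hx1 : x < 1) (hq : 0 < q) :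
    (1 - x) ^ q * (1 + q * x) ≤ 1 := by
  rcases le_or_gt q 1 with hq1 | hq1
  · have h := rpow_one_add_le_one_add_mul_self (s := -x) (by linarith) hq.le hq1
    have h' : (1 - x) ^ q ≤ 1 - q * x := by
      have e : (1 : ℝ) + -x = 1 - x := by ring
      rw [e] at h; linarith
    have hnn : (0:ℝ) ≤ (1 - x) ^ q := Real.rpow_nonneg (by linarith) _
    have hpx : (0:ℝ) ≤ 1 + q * x := by positivity
    nlinarith [mul_le_mul_of_nonneg_right h' hpx, sq_nonneg (q * x)]
  · have h := one_add_mul_self_le_rpow_one_add (s := x) (by linarith) hq1.le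
    have hnn : (0:ℝ) ≤ (1 - x) ^ q := Real.rpow_nonneg (by linarith) _
    have h2 : (1 - x) ^ q * (1 + q * x) ≤ (1 - x) ^ q * (1 + x) ^ q :=
      mul_le_mul_of_nonneg_left h hnn
    have h3 : (1 - x) ^ q * (1 + x) ^ q = ((1 - x) * (1 + x)) ^ q :=
      (Real.mul_rpow (by linarith) (by linarith)).symm
    have h4 : ((1 - x) * (1 + x)) ^ q ≤ 1 :=
      Real.rpow_le_one (by nlinarith) (by nlinarith) hq.le
    linarith

private lemma aux_step {u s : ℝ} (hu : 2 ≤ u) (hs : 1 < s) :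
    (s - 1) * u ^ (-s) ≤ (u - 1) ^ (1 - s) - u ^ (1 - s) := by
  have hu0 : 0 < u := by linarith
  set x : ℝ := 1 / u with hxdef
  have hx0 : 0 < x := by positivity
  have hx1 : x < 1 := by rw [hxdef, div_lt_one hu0]; linarith
  have key : 1 + (s - 1) * x ≤ (1 - x) ^ (1 - s) := by
    have hb := aux_bern hx0.le hx1 (by linarith : (0:ℝ) < s - 1)
    have hpos : (0:ℝ) < (1 - x) ^ (s - 1) := Real.rpow_pos_of_pos (by linarith) _
    have e : (1 - x) ^ (1 - s) = ((1 - x) ^ (s - 1))⁻¹ := by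
      rw [← Real.rpow_neg (by linarith : (0:ℝ) ≤ 1 - x)]
      congr 1
      ring
    rw [e, inv_eq_one_div, le_div_iff₀ hpos]
    nlinarith [hb]
  have hux : u - 1 = u * (1 - x) := by
    rw [hxdef]
    field_simp
  have e1 : (u - 1) ^ (1 - s) = u ^ (1 - s) * (1 - x) ^ (1 - s) := by
    rw [hux, Real.mul_rpow hu0.le (by linarith)]
  have e2 : u ^ (1 - s) * x = u ^ (-s) := by
    rw [hxdef, one_div, ← Real.rpow_neg_one u, ← Real.rpow_add hu0]
    congr 1
    ring
  have hup : (0:ℝ) < u ^ (1 - s) := Real.rpow_pos_of_pos hu0 _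
  calc (s - 1) * u ^ (-s) = u ^ (1 - s) * ((s - 1) * x) := by rw [← e2]; ring
    _ ≤ u ^ (1 - s) * ((1 - x) ^ (1 - s) - 1) := by
        apply mul_le_mul_of_nonneg_left (by linarith) hup.le
    _ = (u - 1) ^ (1 - s) - u ^ (1 - s) := by rw [e1]; ring

private lemma aux_tele (f : ℕ → ℝ) (m N : ℕ) (h : m ≤ N) :
    ∑ j ∈ Finset.Ioc m N, (f (j - 1) - f j) = f m - f N := by
  induction N, h using Nat.le_induction with
  | base => simp
  | succ n hn ih =>
      rw [Finset.sum_Ioc_succ_top hn, ih, Nat.add_sub_cancel]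
      ring

private lemma aux_tail {s : ℝ} (hs : 1 < s) (m N : ℕ) (hm : 1 ≤ m) (h : m ≤ N) :
    ∑ j ∈ Finset.Ioc m N, (j : ℝ) ^ (-s) ≤ (m : ℝ) ^ (1 - s) / (s - 1) := by
  have hs1 : (0:ℝ) < s - 1 := by linarith
  set f : ℕ → ℝ := fun k => (k : ℝ) ^ (1 - s) with hfdef
  have key : ∀ j ∈ Finset.Ioc m N, (j : ℝ) ^ (-s) ≤ (f (j - 1) - f j) / (s - 1) := by
    intro j hj
    rw [Finset.mem_Ioc] at hj
    have hj2 : 2 ≤ j := by omega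
    have hcast : ((j - 1 : ℕ) : ℝ) = (j : ℝ) - 1 := by
      have h1 : (1:ℕ) ≤ j := by omega
      push_cast [h1]
      ring
    have hstep := aux_step (u := (j : ℝ)) (by exact_mod_cast hj2) hs
    rw [le_div_iff₀ hs1, hfdef]
    simp only [hcast]
    nlinarith [hstep]
  have hNf : (0:ℝ) ≤ f N := Real.rpow_nonneg (Nat.cast_nonneg N) _
  calc ∑ j ∈ Finset.Ioc m N, (j : ℝ) ^ (-s)
      ≤ ∑ j ∈ Finset.Ioc m N, (f (j - 1) - f j) / (s - 1) := Finset.sum_le_sum key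
    _ = (∑ j ∈ Finset.Ioc m N, (f (j - 1) - f j)) / (s - 1) := by rw [Finset.sum_div]
    _ = (f m - f N) / (s - 1) := by rw [aux_tele f m N h]
    _ ≤ f m / (s - 1) := (div_le_div_iff_of_pos_right hs1).mpr (by linarith)
    _ = (m : ℝ) ^ (1 - s) / (s - 1) := rfl

set_option maxHeartbeats 1000000 in
theorem stmt_9 (N : ℕ) (hN : 1 ≤ N) (b α C θmin θ₁ θ₂ : ℝ)
    (hb : (3 + Real.sqrt 21) / 4 < b) (hα : 0 < α) (hC : 0 ≤ C) (hθmin : 0 < θmin)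
    (h1 : θmin ≤ θ₁) (h2 : θmin ≤ θ₂)
    (lam : ℕ → ℝ) (hlam0 : ∀ j ∈ Finset.Icc 1 N, 0 ≤ lam j)
    (hlam : ∀ j ∈ Finset.Icc 1 N,
      lam j ≤ C * (j : ℝ) ^ (-(2 * b * (2 * b - 1)) / (4 * b + 3)) *
        (N : ℝ) ^ (1 + α / 2)) :
    ∑ j ∈ Finset.Icc 1 N, lam j / (θ₁ * lam j + θ₂) ^ 2 ≤
      ((N : ℝ) ^ ((2 + α) * (4 * b + 3) / (4 * b * (2 * b - 1))) + 1) / θmin ^ 2 +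
        C * (4 * b + 3) *
          (N : ℝ) ^ ((2 + α) * (4 * b + 3) / (4 * b * (2 * b - 1))) /
          (θmin ^ 2 * (4 * b ^ 2 - 6 * b - 3)) := by
  have hsq21 : Real.sqrt 21 ^ 2 = 21 := Real.sq_sqrt (by norm_num)
  have hsqnn := Real.sqrt_nonneg 21
  have h21 : (4:ℝ) ≤ Real.sqrt 21 := by nlinarith
  have hb7 : 7 / 4 < b := by linarith
  have h2b1 : (0:ℝ) < 2 * b - 1 := by linarith
  have h4b3 : (0:ℝ) < 4 * b + 3 := by linarith
  have hquad : (0:ℝ) < 4 * b ^ 2 - 6 * b - 3 := by nlinarith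
  have hθ0 : θmin ≠ 0 := ne_of_gt hθmin
  have h430 : (4 * b + 3 : ℝ) ≠ 0 := ne_of_gt h4b3
  have hq0 : (4 * b ^ 2 - 6 * b - 3 : ℝ) ≠ 0 := ne_of_gt hquad
  have hden0 : (4 * b * (2 * b - 1) : ℝ) ≠ 0 := by positivity
  set s : ℝ := 2 * b * (2 * b - 1) / (4 * b + 3) with hsdef
  have hs1 : 1 < s := by rw [hsdef, lt_div_iff₀ h4b3]; nlinarith
  set ρ : ℝ := (2 + α) * (4 * b + 3) / (4 * b * (2 * b - 1)) with hρdef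
  have hρ0 : 0 < ρ := div_pos (by nlinarith) (by nlinarith)
  have hρs : ρ * s = 1 + α / 2 := by
    rw [hρdef, hsdef]
    field_simp
    ring
  have hs' : s - 1 = (4 * b ^ 2 - 6 * b - 3) / (4 * b + 3) := by
    rw [hsdef]
    field_simp
    ring
  have hexp : -(2 * b * (2 * b - 1)) / (4 * b + 3) = -s := by rw [hsdef]; ring
  have hN0 : (0:ℝ) < N := by exact_mod_cast hN
  have hN1 : (1:ℝ) ≤ N := by exact_mod_cast hN
  set R : ℝ := (N : ℝ) ^ ρ with hRdef
  have hR1 : 1 ≤ R := by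
    have := Real.rpow_le_rpow zero_le_one hN1 hρ0.le
    simpa [Real.one_rpow] using this
  have eR : (N : ℝ) ^ (1 + α / 2) * R ^ (1 - s) = R := by
    rw [hRdef, ← Real.rpow_mul (Nat.cast_nonneg N), ← Real.rpow_add hN0]
    congr 1
    linear_combination -hρs
  set m : ℕ := ⌈R⌉₊ with hmdef
  have hm1 : 1 ≤ m := Nat.one_le_ceil_iff.mpr (by linarith)
  have hmR : R ≤ (m : ℝ) := Nat.le_ceil R
  have hmup : (m : ℝ) ≤ R + 1 := (Nat.ceil_lt_add_one (by linarith : (0:ℝ) ≤ R)).le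
  set M : ℕ := min m N with hMdef
  have hMN : M ≤ N := min_le_right _ _
  have hMm' : (M : ℝ) ≤ (m : ℝ) := by exact_mod_cast min_le_left m N
  clear_value M m R ρ s
  have hθ1 : 0 < θ₁ := lt_of_lt_of_le hθmin h1
  have hθ2 : 0 < θ₂ := lt_of_lt_of_le hθmin h2
  -- split the sum
  have hsplit : ∑ j ∈ Finset.Icc 1 N, lam j / (θ₁ * lam j + θ₂) ^ 2
      = (∑ j ∈ Finset.Ioc 0 M, lam j / (θ₁ * lam j + θ₂) ^ 2)
        + ∑ j ∈ Finset.Ioc M N, lam j / (θ₁ * lam j + θ₂) ^ 2 := by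
    have hset : Finset.Icc 1 N = Finset.Ioc 0 M ∪ Finset.Ioc M N := by
      rw [Finset.Ioc_union_Ioc_eq_Ioc (Nat.zero_le M) hMN, ← Finset.Icc_add_one_left_eq_Ioc]; rfl
    have hdisj : Disjoint (Finset.Ioc 0 M) (Finset.Ioc M N) := by
      apply Finset.disjoint_left.mpr
      intro a ha hb2
      rw [Finset.mem_Ioc] at ha hb2
      omega
    rw [hset, Finset.sum_union hdisj]
  -- head bound
  have head_bound : ∑ j ∈ Finset.Ioc 0 M, lam j / (θ₁ * lam j + θ₂) ^ 2
      ≤ (R + 1) / θmin ^ 2 := by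
    have hterm : ∀ j ∈ Finset.Ioc 0 M, lam j / (θ₁ * lam j + θ₂) ^ 2 ≤ 1 / θmin ^ 2 := by
      intro j hj
      rw [Finset.mem_Ioc] at hj
      have hjI : j ∈ Finset.Icc 1 N := Finset.mem_Icc.mpr ⟨hj.1, hj.2.trans hMN⟩
      have hl := hlam0 j hjI
      have hd : 0 < θ₁ * lam j + θ₂ := by nlinarith
      rw [div_le_div_iff₀ (by positivity) (by positivity)]
      nlinarith [sq_nonneg (θ₁ * lam j), mul_le_mul h1 h2 hθmin.le hθ1.le,
        mul_nonneg (mul_nonneg hθ1.le hθ2.le) hl, mul_nonneg hl hθmin.le]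
    calc ∑ j ∈ Finset.Ioc 0 M, lam j / (θ₁ * lam j + θ₂) ^ 2
        ≤ ∑ _j ∈ Finset.Ioc 0 M, 1 / θmin ^ 2 := Finset.sum_le_sum hterm
      _ = (M : ℝ) * (1 / θmin ^ 2) := by
          rw [Finset.sum_const, Nat.card_Ioc, nsmul_eq_mul]
          norm_num
      _ ≤ (R + 1) * (1 / θmin ^ 2) := by
          apply mul_le_mul_of_nonneg_right (by linarith) (by positivity)
      _ = (R + 1) / θmin ^ 2 := by ring
  -- tail bound
  have tail_bound : ∑ j ∈ Finset.Ioc M N, lam j / (θ₁ * lam j + θ₂) ^ 2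
      ≤ C * (4 * b + 3) * R / (θmin ^ 2 * (4 * b ^ 2 - 6 * b - 3)) := by
    have hRHS0 : 0 ≤ C * (4 * b + 3) * R / (θmin ^ 2 * (4 * b ^ 2 - 6 * b - 3)) := by
      apply div_nonneg
      · exact mul_nonneg (mul_nonneg hC h4b3.le) (by linarith)
      · exact mul_nonneg (sq_nonneg θmin) hquad.le
    rcases le_or_gt m N with hmN | hmN
    · have hMm : M = m := by rw [hMdef]; exact min_eq_left hmN
      have step1 : ∀ j ∈ Finset.Ioc M N, lam j / (θ₁ * lam j + θ₂) ^ 2 ≤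
          (C * (N : ℝ) ^ (1 + α / 2) / θmin ^ 2) * (j : ℝ) ^ (-s) := by
        intro j hj
        rw [Finset.mem_Ioc] at hj
        have hjI : j ∈ Finset.Icc 1 N := Finset.mem_Icc.mpr ⟨by omega, hj.2⟩
        have hl := hlam0 j hjI
        have h1' : lam j / (θ₁ * lam j + θ₂) ^ 2 ≤ lam j / θmin ^ 2 := by
          have hd2 : θmin ^ 2 ≤ (θ₁ * lam j + θ₂) ^ 2 := by
            nlinarith [mul_nonneg (mul_nonneg hθ1.le hθ2.le) hl, sq_nonneg (θ₁ * lam j),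
              mul_le_mul h2 h2 hθmin.le hθ2.le]
          rw [div_le_div_iff₀ (by positivity) (by positivity)]
          have := mul_le_mul_of_nonneg_left hd2 hl
          linarith
        have h2' := hlam j hjI
        rw [hexp] at h2'
        calc lam j / (θ₁ * lam j + θ₂) ^ 2 ≤ lam j / θmin ^ 2 := h1'
          _ ≤ (C * (j : ℝ) ^ (-s) * (N : ℝ) ^ (1 + α / 2)) / θmin ^ 2 := by
              gcongr
          _ = (C * (N : ℝ) ^ (1 + α / 2) / θmin ^ 2) * (j : ℝ) ^ (-s) := by ring
      have hfac : 0 ≤ C * (N : ℝ) ^ (1 + α / 2) / θmin ^ 2 := by positivity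
      have hR0 : (0:ℝ) < R := by linarith
      have hmm : (m : ℝ) ^ (1 - s) ≤ R ^ (1 - s) :=
        Real.rpow_le_rpow_of_nonpos hR0 hmR (by linarith)
      calc ∑ j ∈ Finset.Ioc M N, lam j / (θ₁ * lam j + θ₂) ^ 2
          ≤ ∑ j ∈ Finset.Ioc M N, (C * (N : ℝ) ^ (1 + α / 2) / θmin ^ 2) * (j : ℝ) ^ (-s) :=
            Finset.sum_le_sum step1
        _ = (C * (N : ℝ) ^ (1 + α / 2) / θmin ^ 2) * ∑ j ∈ Finset.Ioc M N, (j : ℝ) ^ (-s) := by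
            rw [Finset.mul_sum]
        _ ≤ (C * (N : ℝ) ^ (1 + α / 2) / θmin ^ 2) * ((m : ℝ) ^ (1 - s) / (s - 1)) := by
            apply mul_le_mul_of_nonneg_left _ hfac
            rw [hMm]
            exact aux_tail hs1 m N hm1 hmN
        _ ≤ (C * (N : ℝ) ^ (1 + α / 2) / θmin ^ 2) * (R ^ (1 - s) / (s - 1)) := by
            apply mul_le_mul_of_nonneg_left _ hfac
            exact (div_le_div_iff_of_pos_right (by linarith)).mpr hmm
        _ = C * ((N : ℝ) ^ (1 + α / 2) * R ^ (1 - s)) / (θmin ^ 2 * (s - 1)) := by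
            have hsm : s - 1 ≠ 0 := ne_of_gt (by linarith)
            field_simp
        _ = C * R / (θmin ^ 2 * (s - 1)) := by rw [eR]
        _ = C * (4 * b + 3) * R / (θmin ^ 2 * (4 * b ^ 2 - 6 * b - 3)) := by
            rw [hs']
            field_simp
    · have hMeq : M = N := by rw [hMdef]; exact min_eq_right hmN.le
      rw [hMeq]
      simpa using hRHS0
  rw [hsplit]
  have hfin := add_le_add head_bound tail_bound
  linarith
end

section
/- Let N ≥ 1 be an integer, let b ≥ (3 + √21)/4, α > 0, C ≥ 1, and let 0 < θ_min ≤ θ₁, θ₂ ≤ θ_max. Let λ_1, …, λ_N be nonnegative reals satisfying λ_j ≤ C · j^{−2b(2b−1)/(4b+3)} · N^{1+α/2} for every j ∈ {1, …, N}, and set ρ = (2+α)(4b+3)/(4b(2b−1)). Then (N − C N^ρ)/(4θ_max²) ≤ ∑_{j=1}^N 1/(θ₁λ_j + θ₂)² ≤ N/θ_min². -/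
set_option maxHeartbeats 1000000 in
theorem stmt_10 (N : ℕ) (hN : 1 ≤ N) (b α C θmin θmax θ₁ θ₂ : ℝ)
    (hb : (3 + Real.sqrt 21) / 4 ≤ b) (hα : 0 < α) (hC : 1 ≤ C) (hθmin : 0 < θmin)
    (h1 : θmin ≤ θ₁) (h1' : θ₁ ≤ θmax) (h2 : θmin ≤ θ₂) (h2' : θ₂ ≤ θmax)
    (lam : ℕ → ℝ) (hlam0 : ∀ j ∈ Finset.Icc 1 N, 0 ≤ lam j)
    (hlam : ∀ j ∈ Finset.Icc 1 N,
      lam j ≤ C * (j : ℝ) ^ (-(2 * b * (2 * b - 1)) / (4 * b + 3)) *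
        (N : ℝ) ^ (1 + α / 2)) :
    ((N : ℝ) - C * (N : ℝ) ^ ((2 + α) * (4 * b + 3) / (4 * b * (2 * b - 1)))) /
        (4 * θmax ^ 2) ≤
      ∑ j ∈ Finset.Icc 1 N, 1 / (θ₁ * lam j + θ₂) ^ 2 ∧
    ∑ j ∈ Finset.Icc 1 N, 1 / (θ₁ * lam j + θ₂) ^ 2 ≤ (N : ℝ) / θmin ^ 2 := by
  have h21 : Real.sqrt 21 ^ 2 = 21 := Real.sq_sqrt (by norm_num)
  have h21' : (4:ℝ) ≤ Real.sqrt 21 := by nlinarith [Real.sqrt_nonneg 21]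
  have hb7 : (7:ℝ)/4 ≤ b := by linarith
  have hθmax : 0 < θmax := lt_of_lt_of_le hθmin (le_trans h1 h1')
  have hθ1pos : 0 < θ₁ := lt_of_lt_of_le hθmin h1
  have hθ2pos : 0 < θ₂ := lt_of_lt_of_le hθmin h2
  set β : ℝ := (2*b*(2*b-1))/(4*b+3) with hβdef
  have hden : (0:ℝ) < 4*b+3 := by linarith
  have hβ1 : 1 ≤ β := by
    rw [hβdef, le_div_iff₀ hden]; nlinarith
  have hβpos : (0:ℝ) < β := lt_of_lt_of_le one_pos hβ1
  set ρ : ℝ := (2 + α) * (4 * b + 3) / (4 * b * (2 * b - 1)) with hρdef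
  have hNpos : (0:ℝ) < (N:ℝ) := by exact_mod_cast hN
  set T : ℝ := C * (N:ℝ) ^ ρ with hTdef
  have hTnn : 0 ≤ T := by positivity
  -- Upper bound
  have hupper : ∑ j ∈ Finset.Icc 1 N, 1 / (θ₁ * lam j + θ₂) ^ 2 ≤ (N : ℝ) / θmin ^ 2 := by
    have hterm : ∀ j ∈ Finset.Icc 1 N, 1 / (θ₁ * lam j + θ₂) ^ 2 ≤ 1 / θmin ^ 2 := by
      intro j hj
      have h0 := hlam0 j hj
      have hml : 0 ≤ θ₁ * lam j := mul_nonneg hθ1pos.le h0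
      have hle : θmin ≤ θ₁ * lam j + θ₂ := by linarith
      have hsq : θmin ^ 2 ≤ (θ₁ * lam j + θ₂) ^ 2 := by nlinarith
      exact one_div_le_one_div_of_le (by positivity) hsq
    calc ∑ j ∈ Finset.Icc 1 N, 1 / (θ₁ * lam j + θ₂) ^ 2
        ≤ ∑ _j ∈ Finset.Icc 1 N, 1 / θmin ^ 2 := Finset.sum_le_sum hterm
      _ = (N : ℝ) * (1 / θmin ^ 2) := by
          rw [Finset.sum_const, Nat.card_Icc]; simp [nsmul_eq_mul]
      _ = (N : ℝ) / θmin ^ 2 := by ring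
  refine ⟨?_, hupper⟩
  -- Lower bound
  set G := (Finset.Icc 1 N).filter (fun j => lam j ≤ 1) with hGdef
  have hterm : ∀ j ∈ G, 1 / (4 * θmax ^ 2) ≤ 1 / (θ₁ * lam j + θ₂) ^ 2 := by
    intro j hj
    rw [hGdef, Finset.mem_filter] at hj
    obtain ⟨hjI, hj1⟩ := hj
    have h0 := hlam0 j hjI
    have hml : 0 ≤ θ₁ * lam j := mul_nonneg hθ1pos.le h0
    have hposd : 0 < θ₁ * lam j + θ₂ := by linarith
    have hle : θ₁ * lam j + θ₂ ≤ 2 * θmax := by nlinarith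
    have hsq : (θ₁ * lam j + θ₂) ^ 2 ≤ 4 * θmax ^ 2 := by nlinarith
    exact one_div_le_one_div_of_le (by positivity) hsq
  have hnn : ∀ j ∈ Finset.Icc 1 N, 0 ≤ 1 / (θ₁ * lam j + θ₂) ^ 2 := by
    intro j hj
    have h0 := hlam0 j hj
    have hml : 0 ≤ θ₁ * lam j := mul_nonneg hθ1pos.le h0
    have hposd : 0 < θ₁ * lam j + θ₂ := by linarith
    positivity
  -- card of bad set
  set B := (Finset.Icc 1 N).filter (fun j => ¬ lam j ≤ 1) with hBdef
  have hBbound : (B.card : ℝ) ≤ T := by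
    have hsub : B ⊆ Finset.Icc 1 (Nat.floor T) := by
      intro j hj
      rw [hBdef, Finset.mem_filter] at hj
      obtain ⟨hjI, hj1⟩ := hj
      rw [Finset.mem_Icc] at hjI
      push_neg at hj1
      have hjpos : (0:ℝ) < (j:ℝ) := by exact_mod_cast hjI.1
      have h1lt : (1:ℝ) < C * (j : ℝ) ^ (-β) * (N : ℝ) ^ (1 + α / 2) := by
        have := hlam j (Finset.mem_Icc.mpr hjI)
        rw [neg_div] at this
        linarith
      have e : (j:ℝ) ^ (-β) * (j:ℝ) ^ β = 1 := by
        rw [← Real.rpow_add hjpos]; simp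
      have hkey : (j:ℝ) ^ β ≤ C * (N : ℝ) ^ (1 + α / 2) := by
        calc (j:ℝ) ^ β = 1 * (j:ℝ) ^ β := (one_mul _).symm
          _ ≤ (C * (j : ℝ) ^ (-β) * (N : ℝ) ^ (1 + α / 2)) * (j:ℝ) ^ β :=
              mul_le_mul_of_nonneg_right h1lt.le (Real.rpow_nonneg hjpos.le β)
          _ = C * (N : ℝ) ^ (1 + α / 2) * ((j:ℝ) ^ (-β) * (j:ℝ) ^ β) := by ring
          _ = C * (N : ℝ) ^ (1 + α / 2) := by rw [e, mul_one]
      have hjT : (j:ℝ) ≤ T := by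
        have hjeq : (j:ℝ) = ((j:ℝ) ^ β) ^ (1/β) := by
          rw [← Real.rpow_mul hjpos.le, mul_one_div, div_self hβpos.ne', Real.rpow_one]
        rw [hjeq, hTdef]
        calc ((j:ℝ) ^ β) ^ (1/β) ≤ (C * (N:ℝ) ^ (1+α/2)) ^ (1/β) :=
            Real.rpow_le_rpow (Real.rpow_nonneg hjpos.le β) hkey (by positivity)
          _ = C ^ (1/β) * ((N:ℝ) ^ (1+α/2)) ^ (1/β) :=
              Real.mul_rpow (by linarith) (Real.rpow_nonneg hNpos.le _)
          _ = C ^ (1/β) * (N:ℝ) ^ ((1+α/2)*(1/β)) := by rw [← Real.rpow_mul hNpos.le]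
          _ ≤ C * (N:ℝ) ^ ρ := by
              have hb0 : b ≠ 0 := by positivity
              have h2b : (2*b-1) ≠ 0 := by nlinarith
              have e2 : (1+α/2)*(1/β) = ρ := by
                rw [hβdef, hρdef]; field_simp; ring
              rw [e2]
              have hCle : C ^ (1/β) ≤ C := by
                calc C ^ (1/β) ≤ C ^ (1:ℝ) :=
                    Real.rpow_le_rpow_of_exponent_le hC (by rw [div_le_one hβpos]; exact hβ1)
                  _ = C := Real.rpow_one C
              exact mul_le_mul_of_nonneg_right hCle (Real.rpow_nonneg hNpos.le ρ)
      refine Finset.mem_Icc.mpr ⟨hjI.1, Nat.le_floor ?_⟩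
      exact_mod_cast hjT
    have hc : B.card ≤ Nat.floor T := by
      have h := Finset.card_le_card hsub
      rw [Nat.card_Icc] at h
      omega
    calc (B.card : ℝ) ≤ (Nat.floor T : ℝ) := by exact_mod_cast hc
      _ ≤ T := Nat.floor_le hTnn
  have hGcard : (N:ℝ) - T ≤ (G.card : ℝ) := by
    have := Finset.card_filter_add_card_filter_not (s := Finset.Icc 1 N)
      (p := fun j => lam j ≤ 1)
    rw [Nat.card_Icc] at this
    have hNG : G.card + B.card = N := by
      rw [hGdef, hBdef]; omega
    have : (G.card : ℝ) + (B.card : ℝ) = (N:ℝ) := by exact_mod_cast hNG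
    linarith
  calc ((N : ℝ) - T) / (4 * θmax ^ 2)
      ≤ (G.card : ℝ) / (4 * θmax ^ 2) := by
        gcongr
    _ = (G.card : ℝ) * (1 / (4 * θmax ^ 2)) := by ring
    _ ≤ ∑ j ∈ G, 1 / (θ₁ * lam j + θ₂) ^ 2 := by
        have := Finset.card_nsmul_le_sum G _ _ hterm
        simpa [nsmul_eq_mul] using this
    _ ≤ ∑ j ∈ Finset.Icc 1 N, 1 / (θ₁ * lam j + θ₂) ^ 2 :=
        Finset.sum_le_sum_of_subset_of_nonneg (Finset.filter_subset _ _)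
          (fun j hj _ => hnn j hj)
end

section
/- Let 0 < θ_min ≤ θ₁, θ₂, θ₁*, θ₂* ≤ θ_max, let M ≥ 2 be an integer, let τ > 0, b > 0, C₁ ≥ 0, and let S₁₁, S₁₂, S₂₂ be nonnegative reals satisfying S₁₁ ≥ (log M)/(16 b θ_max²), S₁₂ ≤ (log M)/(b θ_min²), and S₂₂ ≥ (M − C₁ log M)/(4θ_max²). Define g₁ = [ (θ₁ − θ₁*)S₁₁ + (θ₂ − θ₂*)S₁₂ ] / (2τ log M) and g₂ = [ (θ₁ − θ₁*)S₁₂ + (θ₂ − θ₂*)S₂₂ ] / (2M). Then (θ₁ − θ₁*)g₁ + (θ₂ − θ₂*)g₂ ≥ (γ/2)·[ (θ₁ − θ₁*)² + (θ₂ − θ₂*)² ] − ( C₁/(8θ_max²) + 1/(2bθ_min²) ) · (θ_max − θ_min)² · (log M)/M, where γ = min{ 1/(32τbθ_max²), 1/(4θ_max²) − 8θ_max²/(τbθ_min⁴) }. -/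
set_option maxHeartbeats 1000000 in

theorem stmt_11 (θmin θmax θ₁ θ₂ θ₁s θ₂s : ℝ) (hθmin : 0 < θmin)
    (h1 : θmin ≤ θ₁) (h1' : θ₁ ≤ θmax) (h2 : θmin ≤ θ₂) (h2' : θ₂ ≤ θmax)
    (h3 : θmin ≤ θ₁s) (h3' : θ₁s ≤ θmax) (h4 : θmin ≤ θ₂s) (h4' : θ₂s ≤ θmax)
    (M : ℕ) (hM : 2 ≤ M) (τ b C₁ : ℝ) (hτ : 0 < τ) (hb : 0 < b) (hC₁ : 0 ≤ C₁)
    (S₁₁ S₁₂ S₂₂ : ℝ) (hS₁₁0 : 0 ≤ S₁₁) (hS₁₂0 : 0 ≤ S₁₂) (hS₂₂0 : 0 ≤ S₂₂)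
    (hS₁₁ : Real.log M / (16 * b * θmax ^ 2) ≤ S₁₁)
    (hS₁₂ : S₁₂ ≤ Real.log M / (b * θmin ^ 2))
    (hS₂₂ : ((M : ℝ) - C₁ * Real.log M) / (4 * θmax ^ 2) ≤ S₂₂)
    (g₁ g₂ γ : ℝ)
    (hg₁ : g₁ = ((θ₁ - θ₁s) * S₁₁ + (θ₂ - θ₂s) * S₁₂) / (2 * τ * Real.log M))
    (hg₂ : g₂ = ((θ₁ - θ₁s) * S₁₂ + (θ₂ - θ₂s) * S₂₂) / (2 * M))
    (hγ : γ = min (1 / (32 * τ * b * θmax ^ 2))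
      (1 / (4 * θmax ^ 2) - 8 * θmax ^ 2 / (τ * b * θmin ^ 4))) :
    (θ₁ - θ₁s) * g₁ + (θ₂ - θ₂s) * g₂ ≥
      γ / 2 * ((θ₁ - θ₁s) ^ 2 + (θ₂ - θ₂s) ^ 2) -
        (C₁ / (8 * θmax ^ 2) + 1 / (2 * b * θmin ^ 2)) * (θmax - θmin) ^ 2 *
          (Real.log M / M) := by
  set a := θ₁ - θ₁s with ha
  set c := θ₂ - θ₂s with hc
  set L := Real.log M with hLdef
  have hL0 : 0 < L := Real.log_pos (by exact_mod_cast Nat.lt_of_lt_of_le one_lt_two hM)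
  clear_value a c L
  have hθmax : 0 < θmax := lt_of_lt_of_le hθmin (h1.trans h1')
  have hM1 : (1:ℝ) < (M:ℝ) := by exact_mod_cast Nat.lt_of_lt_of_le one_lt_two hM
  have hMpos : (0:ℝ) < (M:ℝ) := by linarith
  have hL : 0 < L := hL0
  -- split the inner product
  have hsplit : a * g₁ + c * g₂ =
      a^2*S₁₁/(2*τ*L) + a*c*S₁₂/(2*τ*L) + a*c*S₁₂/(2*M) + c^2*S₂₂/(2*M) := by
    rw [hg₁, hg₂]; ring
  -- basic bounds
  have hcD : c ≤ θmax - θmin := by rw [hc]; linarith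
  have hcD' : -(θmax - θmin) ≤ c := by rw [hc]; linarith
  have haD : a ≤ θmax - θmin := by rw [ha]; linarith
  have haD' : -(θmax - θmin) ≤ a := by rw [ha]; linarith
  have hc2 : c^2 ≤ (θmax - θmin)^2 := by nlinarith
  have hac : -((θmax - θmin)^2) ≤ a*c := by nlinarith [mul_nonneg (by linarith : (0:ℝ) ≤ θmax - θmin - a) (by linarith : (0:ℝ) ≤ θmax - θmin + c), mul_nonneg (by linarith : (0:ℝ) ≤ θmax - θmin + a) (by linarith : (0:ℝ) ≤ θmax - θmin - c)]
  have hS₁₂' : S₁₂ * (b * θmin^2) ≤ L := by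
    rwa [← le_div_iff₀ (by positivity)]
  -- Step A
  have hA : a^2/(32*τ*b*θmax^2) ≤ a^2*S₁₁/(2*τ*L) := by
    rw [div_le_div_iff₀ (by positivity) (by positivity)]
    have h' : L ≤ S₁₁ * (16*b*θmax^2) := by rwa [div_le_iff₀ (by positivity)] at hS₁₁
    nlinarith [mul_le_mul_of_nonneg_left h' (mul_nonneg (sq_nonneg a) hτ.le)]
  -- Step B
  have hB : -((θmin^4*a^2 + 256*θmax^4*c^2)/(64*τ*b*θmax^2*θmin^4)) ≤ a*c*S₁₂/(2*τ*L) := by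
    rw [← neg_div, div_le_div_iff₀ (by positivity) (by positivity)]
    have hq1 : 0 ≤ (θmin^2*a + 16*θmax^2*c)^2 := sq_nonneg _
    have hint1 : 0 ≤ τ * (S₁₂ * (b*θmin^2) * (θmin^2*a + 16*θmax^2*c)^2) :=
      mul_nonneg hτ.le (mul_nonneg (mul_nonneg hS₁₂0 (by positivity)) hq1)
    have hint2 : 0 ≤ τ * ((L - S₁₂*(b*θmin^2)) * (θmin^4*a^2 + 256*θmax^4*c^2)) :=
      mul_nonneg hτ.le (mul_nonneg (by linarith) (by positivity))
    nlinarith [hint1, hint2]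
  -- Step C
  have hC : c^2*((M:ℝ) - C₁*L)/(8*θmax^2*M) ≤ c^2*S₂₂/(2*M) := by
    rw [div_le_div_iff₀ (by positivity) (by positivity)]
    have h' : (M:ℝ) - C₁*L ≤ S₂₂ * (4*θmax^2) := by rwa [div_le_iff₀ (by positivity)] at hS₂₂
    nlinarith [mul_le_mul_of_nonneg_left h' (mul_nonneg (sq_nonneg c) hMpos.le)]
  -- Step D
  have hD : -((θmax-θmin)^2*(L/(b*θmin^2))/(2*M)) ≤ a*c*S₁₂/(2*M) := by
    have hint1 : 0 ≤ (a*c + (θmax-θmin)^2) * S₁₂ :=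
      mul_nonneg (by linarith) hS₁₂0
    have hint2 : 0 ≤ (θmax-θmin)^2 * (L/(b*θmin^2) - S₁₂) :=
      mul_nonneg (by positivity) (by linarith)
    have core : -((θmax-θmin)^2*(L/(b*θmin^2))) ≤ a*c*S₁₂ := by linarith [hint1, hint2]
    rw [← neg_div]
    exact (div_le_div_iff_of_pos_right (by positivity)).mpr core
  -- gamma bounds
  have hγ1 : γ * a^2 ≤ (1/(32*τ*b*θmax^2)) * a^2 :=
    mul_le_mul_of_nonneg_right (hγ ▸ min_le_left _ _) (sq_nonneg a)
  have hγ2 : γ * c^2 ≤ (1/(4*θmax^2) - 8*θmax^2/(τ*b*θmin^4)) * c^2 :=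
    mul_le_mul_of_nonneg_right (hγ ▸ min_le_right _ _) (sq_nonneg c)
  -- split the C fraction
  have eC : c^2*((M:ℝ) - C₁*L)/(8*θmax^2*M) = c^2/(8*θmax^2) - c^2*(C₁*L)/(8*θmax^2*M) := by
    field_simp
  -- error bound for the C part
  have hErr : c^2*(C₁*L)/(8*θmax^2*M) ≤ (θmax-θmin)^2*(C₁*L)/(8*θmax^2*M) := by
    gcongr
  -- fraction identities
  have e1 : a^2/(32*τ*b*θmax^2) - (θmin^4*a^2 + 256*θmax^4*c^2)/(64*τ*b*θmax^2*θmin^4)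
      = (1/2)*((1/(32*τ*b*θmax^2))*a^2) - (1/2)*((8*θmax^2/(τ*b*θmin^4))*c^2) := by
    field_simp
    ring
  have e2 : c^2/(8*θmax^2) = (1/2)*((1/(4*θmax^2))*c^2) := by ring
  have e3 : (θmax-θmin)^2*(L/(b*θmin^2))/(2*M) = 1/(2*b*θmin^2)*(θmax-θmin)^2*(L/M) := by ring
  have e4 : (θmax-θmin)^2*(C₁*L)/(8*θmax^2*M) = C₁/(8*θmax^2)*(θmax-θmin)^2*(L/M) := by ring
  rw [ge_iff_le, hsplit]
  linarith [hA, hB, hC, hD, hγ1, hγ2, hErr]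
end

section
/- Let M ≥ 1 be an integer, let b > (3 + √21)/4, α > 0, C ≥ 1, and let 0 < θ_min ≤ θ₁, θ₂, θ₁*, θ₂* ≤ θ_max. Let λ_1, …, λ_M be nonnegative reals satisfying λ_j ≤ C · j^{−2b(2b−1)/(4b+3)} · M^{1+α/2} for every j ∈ {1, …, M}, and set ρ = (2+α)(4b+3)/(4b(2b−1)), S₁₂ = ∑_{j=1}^M λ_j/(θ₁λ_j + θ₂)², S₂₂ = ∑_{j=1}^M 1/(θ₁λ_j + θ₂)², and g₂ = [ (θ₁ − θ₁*)S₁₂ + (θ₂ − θ₂*)S₂₂ ] / (2M). Then g₂ · (θ₂ − θ₂*) ≥ [ (M − C M^ρ)/(8θ_max² M) ] · (θ₂ − θ₂*)² − (θ_max − θ_min)²/(2M) · [ (M^ρ + 1)/θ_min² + C(4b+3)M^ρ/(θ_min²(4b² − 6b − 3)) ]. -/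
open Finset

private lemma step_ineq_s12 (q a : ℝ) (hq : 0 < q) (ha : 0 < a) :
    q * (a + 1) ^ (-(q + 1)) ≤ a ^ (-q) - (a + 1) ^ (-q) := by
  have ha1 : (0:ℝ) < a + 1 := by linarith
  set v := a / (a + 1) with hv
  have hv0 : 0 < v := div_pos ha ha1
  have hkey : 1 + q * (1 - v) ≤ v ^ (-q) := by
    have hlog : Real.log v ≤ v - 1 := Real.log_le_sub_one_of_pos hv0
    have h1 : q * (1 - v) ≤ -q * Real.log v := by nlinarith
    have h2 : (-q * Real.log v) + 1 ≤ Real.exp (-q * Real.log v) :=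
      Real.add_one_le_exp _
    have h3 : v ^ (-q) = Real.exp (-q * Real.log v) := by
      rw [Real.rpow_def_of_pos hv0]; ring_nf
    rw [h3]; linarith
  have hA : (0:ℝ) < (a + 1) ^ (-q) := Real.rpow_pos_of_pos ha1 _
  have e1 : a ^ (-q) = v ^ (-q) * (a + 1) ^ (-q) := by
    rw [← Real.mul_rpow (le_of_lt hv0) (le_of_lt ha1)]
    congr 1
    rw [hv]
    field_simp
  have e2 : (a + 1) ^ (-(q + 1)) = (a + 1) ^ (-q) * (a + 1)⁻¹ := by
    rw [show -(q+1) = -q + (-1) by ring, Real.rpow_add ha1, Real.rpow_neg_one]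
  have e3 : (1:ℝ) - v = (a + 1)⁻¹ := by rw [hv]; field_simp; ring
  rw [e1, e2]
  calc q * ((a+1)^(-q) * (a+1)⁻¹) = (q * (1 - v)) * (a+1)^(-q) := by rw [← e3]; ring
    _ ≤ (v ^ (-q) - 1) * (a+1)^(-q) := by nlinarith
    _ = v ^ (-q) * (a+1)^(-q) - (a+1)^(-q) := by ring

private lemma tail_sum_aux (γ : ℝ) (hγ : 1 < γ) (J : ℕ) (hJ : 1 ≤ J) (M : ℕ) (hJM : J ≤ M) :
    ∑ j ∈ Finset.Icc (J+1) M, ((j:ℝ)) ^ (-γ) ≤ ((J:ℝ) ^ (1-γ) - (M:ℝ) ^ (1-γ)) / (γ - 1) := by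
  induction M, hJM using Nat.le_induction with
  | base =>
      rw [Finset.Icc_eq_empty (by omega)]
      simp
  | succ M hJM ih =>
      rw [Finset.sum_Icc_succ_top (by omega)]
      have hM0 : (0:ℝ) < (M:ℝ) := by
        have : 1 ≤ M := le_trans hJ hJM
        exact_mod_cast this
      have hstep := step_ineq_s12 (γ - 1) (M:ℝ) (by linarith) hM0
      have e1 : -(γ - 1 + 1) = -γ := by ring
      have e2 : -(γ - 1) = 1 - γ := by ring
      rw [e1, e2] at hstep
      have hc : ((M:ℝ) + 1) = ((M+1 : ℕ) : ℝ) := by push_cast; ring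
      rw [hc] at hstep
      have hγ1 : (0:ℝ) < γ - 1 := by linarith
      have key : ((M+1:ℕ):ℝ) ^ (-γ) ≤ ((M:ℝ)^(1-γ) - ((M+1:ℕ):ℝ)^(1-γ))/(γ-1) := by
        rw [le_div_iff₀ hγ1]
        nlinarith
      have goal2 : ((J:ℝ) ^ (1-γ) - (M:ℝ) ^ (1-γ)) / (γ - 1)
          + ((M:ℝ)^(1-γ) - ((M+1:ℕ):ℝ)^(1-γ))/(γ-1)
          = ((J:ℝ) ^ (1-γ) - ((M+1:ℕ):ℝ) ^ (1-γ)) / (γ - 1) := by ring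
      calc ∑ j ∈ Finset.Icc (J+1) M, ((j:ℝ)) ^ (-γ) + ((M+1:ℕ):ℝ) ^ (-γ)
          ≤ ((J:ℝ) ^ (1-γ) - (M:ℝ) ^ (1-γ)) / (γ - 1)
            + ((M:ℝ)^(1-γ) - ((M+1:ℕ):ℝ)^(1-γ))/(γ-1) := add_le_add ih key
        _ = _ := goal2

private lemma tail_sum (γ : ℝ) (hγ : 1 < γ) (J : ℕ) (hJ : 1 ≤ J) (M : ℕ) :
    ∑ j ∈ Finset.Icc (J+1) M, ((j:ℝ)) ^ (-γ) ≤ (J:ℝ) ^ (1-γ) / (γ - 1) := by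
  have hJ0 : (0:ℝ) < (J:ℝ) := by exact_mod_cast hJ
  by_cases h : J ≤ M
  · refine le_trans (tail_sum_aux γ hγ J hJ M h) ?_
    have hM0 : (0:ℝ) ≤ (M:ℝ) ^ (1-γ) := Real.rpow_nonneg (Nat.cast_nonneg M) _
    exact (div_le_div_iff_of_pos_right (by linarith)).mpr (by linarith)
  · rw [Finset.Icc_eq_empty (by omega)]
    simp
    exact div_nonneg (Real.rpow_nonneg (Nat.cast_nonneg J) _) (by linarith)
set_option maxHeartbeats 1000000 in
theorem stmt_12 (M : ℕ) (hM : 1 ≤ M) (b α C θmin θmax θ₁ θ₂ θ₁s θ₂s : ℝ)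
    (hb : (3 + Real.sqrt 21) / 4 < b) (hα : 0 < α) (hC : 1 ≤ C) (hθmin : 0 < θmin)
    (h1 : θmin ≤ θ₁) (h1' : θ₁ ≤ θmax) (h2 : θmin ≤ θ₂) (h2' : θ₂ ≤ θmax)
    (h3 : θmin ≤ θ₁s) (h3' : θ₁s ≤ θmax) (h4 : θmin ≤ θ₂s) (h4' : θ₂s ≤ θmax)
    (lam : ℕ → ℝ) (hlam0 : ∀ j ∈ Finset.Icc 1 M, 0 ≤ lam j)
    (hlam : ∀ j ∈ Finset.Icc 1 M,
      lam j ≤ C * (j : ℝ) ^ (-(2 * b * (2 * b - 1)) / (4 * b + 3)) *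
        (M : ℝ) ^ (1 + α / 2))
    (ρ S₁₂ S₂₂ g₂ : ℝ)
    (hρ : ρ = (2 + α) * (4 * b + 3) / (4 * b * (2 * b - 1)))
    (hS₁₂ : S₁₂ = ∑ j ∈ Finset.Icc 1 M, lam j / (θ₁ * lam j + θ₂) ^ 2)
    (hS₂₂ : S₂₂ = ∑ j ∈ Finset.Icc 1 M, 1 / (θ₁ * lam j + θ₂) ^ 2)
    (hg₂ : g₂ = ((θ₁ - θ₁s) * S₁₂ + (θ₂ - θ₂s) * S₂₂) / (2 * M)) :
    g₂ * (θ₂ - θ₂s) ≥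
      ((M : ℝ) - C * (M : ℝ) ^ ρ) / (8 * θmax ^ 2 * M) * (θ₂ - θ₂s) ^ 2 -
        (θmax - θmin) ^ 2 / (2 * M) *
          (((M : ℝ) ^ ρ + 1) / θmin ^ 2 +
            C * (4 * b + 3) * (M : ℝ) ^ ρ / (θmin ^ 2 * (4 * b ^ 2 - 6 * b - 3))) := by
  classical
  -- basic facts about b
  have hs21 : Real.sqrt 21 ^ 2 = 21 := Real.sq_sqrt (by norm_num)
  have hs21' : (4:ℝ) < Real.sqrt 21 := by
    have h16 : Real.sqrt 16 = 4 := by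
      rw [show (16:ℝ) = 4^2 by norm_num, Real.sqrt_sq (by norm_num : (0:ℝ) ≤ 4)]
    rw [← h16]
    exact Real.sqrt_lt_sqrt (by norm_num) (by norm_num)
  have hs0 : 0 ≤ Real.sqrt 21 := Real.sqrt_nonneg 21
  have hb1 : (7:ℝ)/4 < b := by linarith
  have hqb : 0 < 4*b^2 - 6*b - 3 := by nlinarith
  set γ : ℝ := 2*b*(2*b-1)/(4*b+3) with hγdef
  have h4b3 : (0:ℝ) < 4*b+3 := by linarith
  have hγ1 : 1 < γ := by
    rw [hγdef, lt_div_iff₀ h4b3]; nlinarith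
  have hγm1 : γ - 1 = (4*b^2-6*b-3)/(4*b+3) := by
    rw [hγdef]; field_simp; ring
  have hρpos : 0 < ρ := by
    rw [hρ]
    apply div_pos (by nlinarith) (by nlinarith)
  have hbne : b ≠ 0 := by nlinarith
  have h2bne : 2*b - 1 ≠ 0 := by nlinarith
  have h4b3ne : 4*b + 3 ≠ 0 := ne_of_gt h4b3
  have hργ : ρ * γ = 1 + α/2 := by
    rw [hρ, hγdef]
    field_simp
    ring
  have hMpos : (0:ℝ) < (M:ℝ) := by exact_mod_cast hM
  have hM1 : (1:ℝ) ≤ (M:ℝ) := by exact_mod_cast hM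
  set K : ℝ := (M:ℝ) ^ (1 + α/2) with hK
  have hKpos : 0 < K := Real.rpow_pos_of_pos hMpos _
  have hMρpos : 0 < (M:ℝ)^ρ := Real.rpow_pos_of_pos hMpos ρ
  have hMρ1 : 1 ≤ (M:ℝ)^ρ := by
    have := Real.rpow_le_rpow_of_exponent_le hM1 (le_of_lt hρpos)
    rwa [Real.rpow_zero] at this
  have hθmax : 0 < θmax := lt_of_lt_of_le hθmin (le_trans h1 h1')
  -- rewrite the eigenvalue bound with γ
  have hexp : ∀ j : ℕ, (j:ℝ) ^ (-(2 * b * (2 * b - 1)) / (4 * b + 3)) = (j:ℝ) ^ (-γ) := by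
    intro j
    congr 1
    rw [hγdef]; ring
  have hlam' : ∀ j ∈ Finset.Icc 1 M, lam j ≤ C * (j : ℝ) ^ (-γ) * K := by
    intro j hj
    have := hlam j hj
    rwa [hexp j] at this
  -- denominators
  have hden : ∀ j ∈ Finset.Icc 1 M, 0 < θ₁ * lam j + θ₂ := by
    intro j hj
    have hl := hlam0 j hj
    nlinarith
  -- define split point J
  set J : ℕ := Nat.floor ((M:ℝ)^ρ) + 1 with hJdef
  have hJ1 : 1 ≤ J := by omega
  have hJreal : (M:ℝ)^ρ ≤ (J:ℝ) := by
    have := Nat.lt_floor_add_one ((M:ℝ)^ρ)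
    rw [hJdef]; push_cast; linarith
  have hJle : (J:ℝ) ≤ (M:ℝ)^ρ + 1 := by
    have := Nat.floor_le (le_of_lt hMρpos)
    rw [hJdef]; push_cast; linarith
  -- S₁₂ is nonnegative
  have hS12_nonneg : 0 ≤ S₁₂ := by
    rw [hS₁₂]
    apply Finset.sum_nonneg
    intro j hj
    exact div_nonneg (hlam0 j hj) (by positivity)
  -- head term bound
  have hterm_le : ∀ j ∈ Finset.Icc 1 M, lam j / (θ₁ * lam j + θ₂) ^ 2 ≤ 1/θmin^2 := by
    intro j hj
    have hl := hlam0 j hj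
    have hd := hden j hj
    rw [div_le_div_iff₀ (by positivity) (by positivity)]
    nlinarith [sq_nonneg (lam j), sq_nonneg (θ₁ * lam j + θ₂ - θmin), mul_nonneg hl hθmin.le]
  -- per-term bound by lam j / θmin²
  have hterm_lam : ∀ j ∈ Finset.Icc 1 M, lam j / (θ₁ * lam j + θ₂) ^ 2 ≤ lam j / θmin^2 := by
    intro j hj
    have hl := hlam0 j hj
    have hd := hden j hj
    have hmθ : θmin ≤ θ₁ * lam j + θ₂ := by nlinarith
    rw [div_le_div_iff₀ (by positivity) (by positivity)]
    nlinarith [mul_self_le_mul_self hθmin.le hmθ, mul_nonneg hl (mul_nonneg hθmin.le hθmin.le)]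
  -- split S₁₂
  have hsplit : S₁₂ = (∑ j ∈ (Finset.Icc 1 M).filter (fun j => j ≤ J),
        lam j / (θ₁ * lam j + θ₂) ^ 2)
      + ∑ j ∈ (Finset.Icc 1 M).filter (fun j => ¬ j ≤ J),
        lam j / (θ₁ * lam j + θ₂) ^ 2 := by
    rw [hS₁₂, Finset.sum_filter_add_sum_filter_not]
  -- head bound
  have hhead : (∑ j ∈ (Finset.Icc 1 M).filter (fun j => j ≤ J),
      lam j / (θ₁ * lam j + θ₂) ^ 2) ≤ ((M:ℝ)^ρ + 1) / θmin^2 := by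
    have hcard : ((Finset.Icc 1 M).filter (fun j => j ≤ J)).card ≤ J := by
      have hsub : (Finset.Icc 1 M).filter (fun j => j ≤ J) ⊆ Finset.Icc 1 J := by
        intro j hj
        simp only [Finset.mem_filter, Finset.mem_Icc] at hj ⊢
        omega
      calc ((Finset.Icc 1 M).filter (fun j => j ≤ J)).card ≤ (Finset.Icc 1 J).card :=
            Finset.card_le_card hsub
        _ = J := by rw [Nat.card_Icc]; omega
    have h1' := Finset.sum_le_card_nsmul ((Finset.Icc 1 M).filter (fun j => j ≤ J))
      (fun j => lam j / (θ₁ * lam j + θ₂) ^ 2) (1/θmin^2)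
      (fun j hj => hterm_le j (Finset.mem_filter.mp hj).1)
    rw [nsmul_eq_mul] at h1'
    calc (∑ j ∈ (Finset.Icc 1 M).filter (fun j => j ≤ J),
          lam j / (θ₁ * lam j + θ₂) ^ 2)
        ≤ (((Finset.Icc 1 M).filter (fun j => j ≤ J)).card : ℝ) * (1/θmin^2) := h1'
      _ ≤ (J:ℝ) * (1/θmin^2) := by
          apply mul_le_mul_of_nonneg_right _ (by positivity)
          exact_mod_cast hcard
      _ ≤ ((M:ℝ)^ρ + 1) * (1/θmin^2) := by
          apply mul_le_mul_of_nonneg_right (by linarith) (by positivity)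
      _ = ((M:ℝ)^ρ + 1) / θmin^2 := by ring
  -- tail bound
  have hfilter_eq : (Finset.Icc 1 M).filter (fun j => ¬ j ≤ J) = Finset.Icc (J+1) M := by
    ext j
    simp only [Finset.mem_filter, Finset.mem_Icc]
    omega
  have htailK : K * (J:ℝ)^(1-γ) ≤ (M:ℝ)^ρ := by
    have h1 : (J:ℝ)^(1-γ) ≤ ((M:ℝ)^ρ)^(1-γ) :=
      Real.rpow_le_rpow_of_nonpos hMρpos hJreal (by linarith)
    have h2 : ((M:ℝ)^ρ)^(1-γ) = (M:ℝ)^(ρ*(1-γ)) := by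
      rw [← Real.rpow_mul (le_of_lt hMpos)]
    have h3 : K * (M:ℝ)^(ρ*(1-γ)) = (M:ℝ)^ρ := by
      rw [hK, ← Real.rpow_add hMpos]
      congr 1
      have : ρ*(1-γ) = ρ - (1+α/2) := by rw [mul_sub, mul_one, hργ]
      rw [this]; ring
    calc K * (J:ℝ)^(1-γ) ≤ K * ((M:ℝ)^ρ)^(1-γ) :=
          mul_le_mul_of_nonneg_left h1 hKpos.le
      _ = (M:ℝ)^ρ := by rw [h2, h3]
  have htail : (∑ j ∈ (Finset.Icc 1 M).filter (fun j => ¬ j ≤ J),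
      lam j / (θ₁ * lam j + θ₂) ^ 2)
      ≤ C * (4*b+3) * (M:ℝ)^ρ / (θmin^2 * (4*b^2 - 6*b - 3)) := by
    rw [hfilter_eq]
    have hsubset : Finset.Icc (J+1) M ⊆ Finset.Icc 1 M := by
      intro j hj
      simp only [Finset.mem_Icc] at hj ⊢
      omega
    have hstep1 : (∑ j ∈ Finset.Icc (J+1) M, lam j / (θ₁ * lam j + θ₂) ^ 2)
        ≤ ∑ j ∈ Finset.Icc (J+1) M, (C * K / θmin^2) * (j:ℝ)^(-γ) := by
      apply Finset.sum_le_sum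
      intro j hj
      have hj' := hsubset hj
      calc lam j / (θ₁ * lam j + θ₂) ^ 2 ≤ lam j / θmin^2 := hterm_lam j hj'
        _ ≤ (C * (j:ℝ)^(-γ) * K) / θmin^2 := by
            apply div_le_div_of_nonneg_right (hlam' j hj') (by positivity)
        _ = (C * K / θmin^2) * (j:ℝ)^(-γ) := by ring
    rw [← Finset.mul_sum] at hstep1
    have hts := tail_sum γ hγ1 J hJ1 M
    have hfac : (0:ℝ) ≤ C * K / θmin^2 := by positivity
    have hstep2 : (C * K / θmin^2) * (∑ j ∈ Finset.Icc (J+1) M, (j:ℝ)^(-γ))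
        ≤ (C * K / θmin^2) * ((J:ℝ)^(1-γ)/(γ-1)) :=
      mul_le_mul_of_nonneg_left hts hfac
    have hstep3 : (C * K / θmin^2) * ((J:ℝ)^(1-γ)/(γ-1))
        ≤ C * (4*b+3) * (M:ℝ)^ρ / (θmin^2 * (4*b^2 - 6*b - 3)) := by
      have he : (C * K / θmin^2) * ((J:ℝ)^(1-γ)/(γ-1))
          = (C / (θmin^2 * (γ-1))) * (K * (J:ℝ)^(1-γ)) := by
        field_simp
      rw [he]
      have hfac2 : (0:ℝ) ≤ C / (θmin^2 * (γ-1)) := by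
        apply div_nonneg (by linarith)
        apply mul_nonneg (by positivity) (by linarith)
      calc (C / (θmin^2 * (γ-1))) * (K * (J:ℝ)^(1-γ))
          ≤ (C / (θmin^2 * (γ-1))) * (M:ℝ)^ρ :=
            mul_le_mul_of_nonneg_left htailK hfac2
        _ = C * (4*b+3) * (M:ℝ)^ρ / (θmin^2 * (4*b^2 - 6*b - 3)) := by
            rw [hγm1]
            field_simp
    linarith
  have hS12_le : S₁₂ ≤ ((M:ℝ)^ρ + 1) / θmin^2
      + C * (4*b+3) * (M:ℝ)^ρ / (θmin^2 * (4*b^2 - 6*b - 3)) := by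
    rw [hsplit]; exact add_le_add hhead htail
  -- S₂₂ lower bound
  set T : Finset ℕ := (Finset.Icc 1 M).filter (fun j : ℕ => C*(M:ℝ)^ρ ≤ (j:ℝ)) with hTdef
  have hcardT : (M:ℝ) - C*(M:ℝ)^ρ ≤ (T.card : ℝ) := by
    have hsum := Finset.card_filter_add_card_filter_not
      (s := Finset.Icc 1 M) (p := fun j : ℕ => C*(M:ℝ)^ρ ≤ (j:ℝ))
    have hcardIcc : (Finset.Icc 1 M).card = M := by rw [Nat.card_Icc]; omega
    have hsub : (Finset.Icc 1 M).filter (fun j : ℕ => ¬ C*(M:ℝ)^ρ ≤ (j:ℝ))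
        ⊆ Finset.Icc 1 (Nat.floor (C*(M:ℝ)^ρ)) := by
      intro j hj
      simp only [Finset.mem_filter, Finset.mem_Icc, not_le] at hj
      refine Finset.mem_Icc.mpr ⟨hj.1.1, Nat.le_floor (le_of_lt hj.2)⟩
    have hcard2 : (((Finset.Icc 1 M).filter (fun j : ℕ => ¬ C*(M:ℝ)^ρ ≤ (j:ℝ))).card : ℝ)
        ≤ C*(M:ℝ)^ρ := by
      have h1 : ((Finset.Icc 1 M).filter (fun j : ℕ => ¬ C*(M:ℝ)^ρ ≤ (j:ℝ))).card
          ≤ Nat.floor (C*(M:ℝ)^ρ) := by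
        calc _ ≤ (Finset.Icc 1 (Nat.floor (C*(M:ℝ)^ρ))).card := Finset.card_le_card hsub
          _ ≤ Nat.floor (C*(M:ℝ)^ρ) := by rw [Nat.card_Icc]; omega
      calc (((Finset.Icc 1 M).filter (fun j : ℕ => ¬ C*(M:ℝ)^ρ ≤ (j:ℝ))).card : ℝ)
          ≤ (Nat.floor (C*(M:ℝ)^ρ) : ℝ) := by exact_mod_cast h1
        _ ≤ C*(M:ℝ)^ρ := Nat.floor_le (by positivity)
    have : (T.card : ℝ)
        + (((Finset.Icc 1 M).filter (fun j : ℕ => ¬ C*(M:ℝ)^ρ ≤ (j:ℝ))).card : ℝ) = (M:ℝ) := by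
      rw [hTdef]
      exact_mod_cast congrArg (Nat.cast (R := ℝ)) (hsum.trans hcardIcc)
    linarith
  have hlam1 : ∀ j ∈ T, lam j ≤ 1 := by
    intro j hj
    rw [hTdef, Finset.mem_filter] at hj
    obtain ⟨hj1, hj2⟩ := hj
    have hCMpos : (0:ℝ) < C * (M:ℝ)^ρ := by positivity
    have hrp : (j:ℝ)^(-γ) ≤ (C*(M:ℝ)^ρ)^(-γ) :=
      Real.rpow_le_rpow_of_nonpos hCMpos hj2 (by linarith)
    have hCpos : (0:ℝ) < C := by linarith
    have e1 : (C*(M:ℝ)^ρ)^(-γ) = C^(-γ) * ((M:ℝ)^ρ)^(-γ) :=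
      Real.mul_rpow (by linarith) hMρpos.le
    have e2 : ((M:ℝ)^ρ)^(-γ) = (M:ℝ)^(ρ*(-γ)) := (Real.rpow_mul hMpos.le _ _).symm
    have e3 : (M:ℝ)^(ρ*(-γ)) * K = 1 := by
      rw [hK, ← Real.rpow_add hMpos]
      rw [show ρ*(-γ) + (1+α/2) = -(ρ*γ) + (1+α/2) by ring, hργ]
      rw [show -(1+α/2) + (1+α/2) = (0:ℝ) by ring, Real.rpow_zero]
    have e4 : C * C^(-γ) = C^(1-γ) := by
      rw [show (1:ℝ)-γ = 1 + (-γ) by ring, Real.rpow_add hCpos, Real.rpow_one]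
    have hcomp : C * (C*(M:ℝ)^ρ)^(-γ) * K = C^(1-γ) := by
      rw [e1, e2]
      calc C * (C^(-γ) * (M:ℝ)^(ρ*(-γ))) * K
          = (C * C^(-γ)) * ((M:ℝ)^(ρ*(-γ)) * K) := by ring
        _ = C^(1-γ) := by rw [e3, e4, mul_one]
    have hC1 : C^(1-γ) ≤ 1 :=
      Real.rpow_le_one_of_one_le_of_nonpos hC (by linarith)
    have hmono : C * (j:ℝ)^(-γ) * K ≤ C * (C*(M:ℝ)^ρ)^(-γ) * K :=
      mul_le_mul_of_nonneg_right (mul_le_mul_of_nonneg_left hrp hCpos.le) hKpos.le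
    have := hlam' j hj1
    linarith
  -- pointwise bound on the T terms of S₂₂
  have hTterm : ∀ j ∈ T, 1/(4*θmax^2) ≤ 1 / (θ₁ * lam j + θ₂) ^ 2 := by
    intro j hj
    have hj1 : j ∈ Finset.Icc 1 M := (Finset.mem_filter.mp hj).1
    have hl := hlam0 j hj1
    have hl1 := hlam1 j hj
    have hd := hden j hj1
    have e1 : θ₁ * lam j ≤ θmax * 1 := mul_le_mul h1' hl1 hl hθmax.le
    have hub : θ₁ * lam j + θ₂ ≤ 2*θmax := by rw [mul_one] at e1; linarith
    have hsq := mul_self_le_mul_self hd.le hub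
    apply one_div_le_one_div_of_le (by positivity)
    calc (θ₁ * lam j + θ₂)^2 = (θ₁*lam j+θ₂)*(θ₁*lam j+θ₂) := pow_two _
      _ ≤ (2*θmax)*(2*θmax) := hsq
      _ = 4*θmax^2 := by ring
  have hS22_ge : ((M:ℝ) - C*(M:ℝ)^ρ)/(4*θmax^2) ≤ S₂₂ := by
    have hsumT : (T.card : ℝ) * (1/(4*θmax^2)) ≤ ∑ j ∈ T, 1 / (θ₁ * lam j + θ₂) ^ 2 := by
      have := Finset.card_nsmul_le_sum T (fun j => 1 / (θ₁ * lam j + θ₂) ^ 2)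
        (1/(4*θmax^2)) hTterm
      rwa [nsmul_eq_mul] at this
    have hsub : (∑ j ∈ T, 1 / (θ₁ * lam j + θ₂) ^ 2) ≤ S₂₂ := by
      rw [hS₂₂]
      apply Finset.sum_le_sum_of_subset_of_nonneg (Finset.filter_subset _ _)
      intro j hj _
      positivity
    have h0 : ((M:ℝ) - C*(M:ℝ)^ρ)/(4*θmax^2) ≤ (T.card : ℝ) * (1/(4*θmax^2)) := by
      rw [div_eq_mul_one_div]
      exact mul_le_mul_of_nonneg_right hcardT (by positivity)
    linarith
  -- final assembly
  obtain ⟨B, hB⟩ : ∃ x : ℝ, ((M:ℝ)^ρ + 1) / θmin^2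
      + C * (4*b+3) * (M:ℝ)^ρ / (θmin^2 * (4*b^2 - 6*b - 3)) = x := ⟨_, rfl⟩
  rw [hB] at hS12_le
  rw [show (((M : ℝ) ^ ρ + 1) / θmin ^ 2 +
      C * (4 * b + 3) * (M : ℝ) ^ ρ / (θmin ^ 2 * (4 * b ^ 2 - 6 * b - 3))) = B from hB]
  have hcross : -((θmax-θmin)^2 * B) ≤ (θ₁-θ₁s)*(θ₂-θ₂s)*S₁₂ := by
    have hx : 0 ≤ (θ₁-θ₁s)*(θ₂-θ₂s) + (θmax-θmin)^2 := by nlinarith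
    have hx2 : 0 ≤ ((θ₁-θ₁s)*(θ₂-θ₂s) + (θmax-θmin)^2) * S₁₂ :=
      mul_nonneg hx hS12_nonneg
    have hx3 : (θmax-θmin)^2 * S₁₂ ≤ (θmax-θmin)^2 * B :=
      mul_le_mul_of_nonneg_left hS12_le (sq_nonneg _)
    have hx2' := hx2
    rw [add_mul] at hx2'
    linarith
  have hquad : (θ₂-θ₂s)^2 * (((M:ℝ) - C*(M:ℝ)^ρ)/(4*θmax^2)) ≤ (θ₂-θ₂s)^2 * S₂₂ :=
    mul_le_mul_of_nonneg_left hS22_ge (sq_nonneg _)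
  have h2M : (0:ℝ) < 2*(M:ℝ) := by linarith
  have hmain : g₂ * (θ₂ - θ₂s)
      = ((θ₁-θ₁s)*(θ₂-θ₂s)*S₁₂ + (θ₂-θ₂s)^2*S₂₂) / (2*(M:ℝ)) := by
    rw [hg₂]; ring
  have hnum : (θ₂-θ₂s)^2 * (((M:ℝ) - C*(M:ℝ)^ρ)/(4*θmax^2)) - (θmax-θmin)^2 * B
      ≤ (θ₁-θ₁s)*(θ₂-θ₂s)*S₁₂ + (θ₂-θ₂s)^2*S₂₂ := by
    have h := add_le_add hcross hquad
    calc (θ₂-θ₂s)^2 * (((M:ℝ) - C*(M:ℝ)^ρ)/(4*θmax^2)) - (θmax-θmin)^2 * B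
        = -((θmax-θmin)^2 * B) + (θ₂-θ₂s)^2 * (((M:ℝ) - C*(M:ℝ)^ρ)/(4*θmax^2)) := by ring
      _ ≤ (θ₁-θ₁s)*(θ₂-θ₂s)*S₁₂ + (θ₂-θ₂s)^2*S₂₂ := h
  have hθmaxne : θmax ≠ 0 := ne_of_gt hθmax
  have hθminne : θmin ≠ 0 := ne_of_gt hθmin
  have hMne : (M:ℝ) ≠ 0 := ne_of_gt hMpos
  have hqbne : 4*b^2 - 6*b - 3 ≠ 0 := ne_of_gt hqb
  have hEq : ((M : ℝ) - C * (M : ℝ) ^ ρ) / (8 * θmax ^ 2 * M) * (θ₂ - θ₂s) ^ 2 -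
        (θmax - θmin) ^ 2 / (2 * M) * B
      = ((θ₂-θ₂s)^2 * (((M:ℝ) - C*(M:ℝ)^ρ)/(4*θmax^2)) - (θmax-θmin)^2 * B) / (2*(M:ℝ)) := by
    field_simp
    ring
  rw [ge_iff_le, hmain, hEq]
  exact (div_le_div_iff_of_pos_right h2M).mpr hnum
end
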